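/- arXiv:2012.00813 — 7 statements merged into one kernel-verified Lean document; each statement's English description precedes it below -/
import Mathlib

section
/- For every real r with 0 < r < 1/2, the achievement set E(x) of the geometric sequence x(n) = r^n (n ≥ 1) is homeomorphic to the Cantor ternary set (equivalently, it is a nonempty compact perfect subset of ℝ with empty interior). -/
open scoped Classical

/-- The achievement set (set of subsums) of a sequence `x`. -/
def achievementSet (x : ℕ → ℝ) : Set ℝ :=
  {s : ℝ | ∃ ε : ℕ → ℝ, (∀ n, ε n = 0 ∨ ε n = 1) ∧ s = ∑' n, ε n * x n}

/-- Sum of `c * q^(n+1)` over indices where `a n = true`. -/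
noncomputable def boolSum (c q : ℝ) (a : ℕ → Bool) : ℝ :=
  ∑' n, if a n then c * q ^ (n + 1) else 0

lemma summable_geom_aux {c q : ℝ} (hq0 : 0 ≤ q) (hq1 : q < 1) :
    Summable (fun n : ℕ => c * q ^ (n + 1)) := by
  have : Summable (fun n : ℕ => (c * q) * q ^ n) :=
    (summable_geometric_of_lt_one hq0 hq1).mul_left _
  refine this.congr fun n => by ring

lemma tsum_geom_aux {c q : ℝ} (hq0 : 0 ≤ q) (hq1 : q < 1) :
    ∑' n : ℕ, c * q ^ (n + 1) = c * q * (1 - q)⁻¹ := by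
  calc ∑' n : ℕ, c * q ^ (n + 1) = ∑' n : ℕ, (c * q) * q ^ n := by
        refine tsum_congr fun n => by ring
    _ = (c * q) * (1 - q)⁻¹ := by rw [tsum_mul_left, tsum_geometric_of_lt_one hq0 hq1]

lemma summable_boolSum {c q : ℝ} (hc : 0 ≤ c) (hq0 : 0 ≤ q) (hq1 : q < 1) (a : ℕ → Bool) :
    Summable (fun n => if a n then c * q ^ (n + 1) else 0) := by
  refine Summable.of_nonneg_of_le (fun n => ?_) (fun n => ?_) (summable_geom_aux hq0 hq1 (c := c))
  · split <;> positivity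
  · split
    · exact le_rfl
    · positivity

lemma continuous_boolSum {c q : ℝ} (hc : 0 ≤ c) (hq0 : 0 ≤ q) (hq1 : q < 1) :
    Continuous (boolSum c q) := by
  refine continuous_tsum (fun n => ?_) (summable_geom_aux hq0 hq1 (c := c)) (fun n a => ?_)
  · exact Continuous.comp
      (continuous_of_discreteTopology
        (f := fun b : Bool => if b then c * q ^ (n + 1) else (0:ℝ))) (continuous_apply n)
  · rw [Real.norm_eq_abs]
    split
    · rw [abs_of_nonneg (by positivity)]
    · simpa using by positivity

lemma boolSum_nonneg {c q : ℝ} (hc : 0 ≤ c) (hq0 : 0 ≤ q) (a : ℕ → Bool) :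
    0 ≤ boolSum c q a := by
  refine tsum_nonneg fun n => ?_
  split <;> positivity

lemma boolSum_le {c q : ℝ} (hc : 0 ≤ c) (hq0 : 0 ≤ q) (hq1 : q < 1) (a : ℕ → Bool) :
    boolSum c q a ≤ c * q * (1 - q)⁻¹ := by
  rw [← tsum_geom_aux hq0 hq1]
  refine Summable.tsum_le_tsum (fun n => ?_) (summable_boolSum hc hq0 hq1 a) (summable_geom_aux hq0 hq1)
  split
  · exact le_rfl
  · positivity

/-- Decomposition into the first term and the rest. -/
lemma boolSum_eq_head_add {c q : ℝ} (hc : 0 ≤ c) (hq0 : 0 ≤ q) (hq1 : q < 1) (a : ℕ → Bool) :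
    boolSum c q a = (if a 0 then c * q else 0) + q * boolSum c q (fun n => a (n + 1)) := by
  rw [boolSum, Summable.tsum_eq_zero_add (summable_boolSum hc hq0 hq1 a)]
  congr 1
  · simp [pow_one]
  · rw [boolSum, ← tsum_mul_left]
    refine tsum_congr fun n => ?_
    split <;> ring

/-- Injectivity of `boolSum` for `q < 1/2`. -/
lemma boolSum_lt {c q : ℝ} (hc : 0 < c) (hq0 : 0 < q) (hq : q < 1 / 2)
    (a b : ℕ → Bool) (n : ℕ) (hk : ∀ k < n, a k = b k) (ha : a n = true) (hb : b n = false) :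
    boolSum c q b < boolSum c q a := by
  have hq1 : q < 1 := by linarith
  have hsa := summable_boolSum hc.le hq0.le hq1 a
  have hsb := summable_boolSum hc.le hq0.le hq1 b
  have hd : Summable (fun k => (if a k then c * q ^ (k + 1) else 0)
      - (if b k then c * q ^ (k + 1) else 0)) := hsa.sub hsb
  have key : boolSum c q a - boolSum c q b
      = ∑' k, ((if a k then c * q ^ (k + 1) else 0) - (if b k then c * q ^ (k + 1) else 0)) := by
    rw [boolSum, boolSum, Summable.tsum_sub hsa hsb]
  set d : ℕ → ℝ := fun k => (if a k then c * q ^ (k + 1) else 0)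
      - (if b k then c * q ^ (k + 1) else 0) with hd_def
  have hsplit : (∑ i ∈ Finset.range (n + 1), d i) + ∑' k, d (k + (n + 1)) = ∑' k, d k :=
    Summable.sum_add_tsum_nat_add (n + 1) hd
  have hfin : ∑ i ∈ Finset.range (n + 1), d i = c * q ^ (n + 1) := by
    rw [Finset.sum_eq_single_of_mem n (Finset.self_mem_range_succ n)]
    · simp [hd_def, ha, hb]
    · intro i hi hne
      have : i < n := lt_of_le_of_ne (Nat.lt_succ_iff.mp (Finset.mem_range.mp hi)) hne
      simp [hd_def, hk i this]
  have htail : -(c * q ^ (n + 2) * (1 - q)⁻¹) ≤ ∑' k, d (k + (n + 1)) := by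
    have hgs : Summable (fun k : ℕ => c * q ^ (n + 2) * q ^ k) :=
      (summable_geometric_of_lt_one hq0.le hq1).mul_left _
    have h1 : ∑' k : ℕ, -(c * q ^ (n + 2) * q ^ k) ≤ ∑' k, d (k + (n + 1)) := by
      refine Summable.tsum_le_tsum (fun k => ?_) hgs.neg ((summable_nat_add_iff (n+1)).2 hd)
      have h2 : (if b (k + (n + 1)) then c * q ^ (k + (n + 1) + 1) else 0)
          ≤ c * q ^ (n + 2) * q ^ k := by
        split
        · have : q ^ (k + (n + 1) + 1) = q ^ (n + 2) * q ^ k := by ring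
          rw [this]; ring_nf; exact le_rfl
        · positivity
      have h3 : 0 ≤ (if a (k + (n + 1)) then c * q ^ (k + (n + 1) + 1) else 0) := by
        split <;> positivity
      simp only [hd_def]
      linarith
    calc -(c * q ^ (n + 2) * (1 - q)⁻¹)
        = ∑' k : ℕ, -(c * q ^ (n + 2) * q ^ k) := by
          rw [tsum_neg, tsum_mul_left, tsum_geometric_of_lt_one hq0.le hq1]
      _ ≤ _ := h1
  have hpos : 0 < boolSum c q a - boolSum c q b := by
    rw [key, ← hsplit, hfin]
    have hP : (0:ℝ) < q ^ (n + 1) := by positivity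
    have hfrac : c * q ^ (n + 2) * (1 - q)⁻¹ < c * q ^ (n + 1) := by
      have h1q : (0:ℝ) < 1 - q := by linarith
      have hlt : c * q ^ (n + 2) < c * q ^ (n + 1) * (1 - q) := by
        have hpow : q ^ (n + 2) = q ^ (n + 1) * q := by ring
        rw [hpow]; nlinarith [mul_pos hc hP]
      calc c * q ^ (n + 2) * (1 - q)⁻¹ < c * q ^ (n + 1) * (1 - q) * (1 - q)⁻¹ :=
            mul_lt_mul_of_pos_right hlt (inv_pos.mpr h1q)
        _ = c * q ^ (n + 1) := by field_simp
    linarith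
  linarith

lemma boolSum_injective {c q : ℝ} (hc : 0 < c) (hq0 : 0 < q) (hq : q < 1 / 2) :
    Function.Injective (boolSum c q) := by
  intro a b hab
  by_contra hne
  have hex : ∃ n, a n ≠ b n := by
    by_contra h
    push_neg at h
    exact hne (funext h)
  classical
  let n := Nat.find hex
  have hn : a n ≠ b n := Nat.find_spec hex
  have hk : ∀ k < n, a k = b k := fun k hlt => by
    by_contra h; exact absurd hlt (not_lt.mpr (Nat.find_le h))
  cases ha : a n <;> cases hb : b n
  · exact hn (ha.trans hb.symm)
  · exact absurd hab (ne_of_lt (boolSum_lt hc hq0 hq b a n (fun k hlt => (hk k hlt).symm) hb ha))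
  · exact absurd hab (ne_of_gt (boolSum_lt hc hq0 hq a b n hk ha hb))
  · exact hn (ha.trans hb.symm)

/-! ### The Cantor set side -/

lemma boolSum_cantor_mem_preCantorSet (m : ℕ) (a : ℕ → Bool) :
    boolSum 2 (1/3) a ∈ preCantorSet m := by
  have hc : (0:ℝ) ≤ 2 := by norm_num
  have hq0 : (0:ℝ) ≤ 1/3 := by norm_num
  have hq1 : (1/3:ℝ) < 1 := by norm_num
  induction m generalizing a with
  | zero =>
    refine ⟨boolSum_nonneg hc hq0 a, ?_⟩
    have := boolSum_le hc hq0 hq1 a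
    calc boolSum 2 (1/3) a ≤ 2 * (1/3) * (1 - 1/3)⁻¹ := this
      _ = 1 := by norm_num
  | succ m ih =>
    rw [boolSum_eq_head_add hc hq0 hq1 a]
    cases h : a 0 with
    | false =>
      left
      exact ⟨boolSum 2 (1/3) (fun n => a (n+1)), ih _, by simp [h]; ring⟩
    | true =>
      right
      exact ⟨boolSum 2 (1/3) (fun n => a (n+1)), ih _, by simp [h]; ring⟩

/-- Prepend a bit. -/
def consB (b : Bool) (a : ℕ → Bool) : ℕ → Bool := fun n => Nat.casesOn n b a

lemma boolSum_consB {c q : ℝ} (hc : 0 ≤ c) (hq0 : 0 ≤ q) (hq1 : q < 1) (b : Bool) (a : ℕ → Bool) :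
    boolSum c q (consB b a) = (if b then c * q else 0) + q * boolSum c q a := by
  rw [boolSum_eq_head_add hc hq0 hq1]
  rfl

lemma approx_cantor (m : ℕ) : ∀ x ∈ preCantorSet m,
    ∃ a : ℕ → Bool, |x - boolSum 2 (1/3) a| ≤ (1/3) ^ m := by
  have hc : (0:ℝ) ≤ 2 := by norm_num
  have hq0 : (0:ℝ) ≤ 1/3 := by norm_num
  have hq1 : (1/3:ℝ) < 1 := by norm_num
  induction m with
  | zero =>
    intro x hx
    refine ⟨fun _ => false, ?_⟩
    have h0 : boolSum 2 (1/3) (fun _ => false) = 0 := by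
      simp [boolSum]
    rw [h0, sub_zero, pow_zero]
    rw [abs_le]
    exact ⟨by linarith [hx.1], hx.2⟩
  | succ m ih =>
    rintro x (⟨y, hy, rfl⟩ | ⟨y, hy, rfl⟩)
    · obtain ⟨a, ha⟩ := ih y hy
      refine ⟨consB false a, ?_⟩
      rw [boolSum_consB hc hq0 hq1]
      simp only [if_neg Bool.false_ne_true]
      have : y / 3 - (0 + 1/3 * boolSum 2 (1/3) a) = (y - boolSum 2 (1/3) a) / 3 := by ring
      rw [this, abs_div, abs_of_nonneg (by norm_num : (0:ℝ) ≤ 3), pow_succ]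
      calc |y - boolSum 2 (1/3) a| / 3 ≤ (1/3)^m / 3 := by
            exact div_le_div_of_nonneg_right ha (by norm_num) |>.trans_eq rfl
        _ = (1/3)^m * (1/3) := by ring
    · obtain ⟨a, ha⟩ := ih y hy
      refine ⟨consB true a, ?_⟩
      rw [boolSum_consB hc hq0 hq1]
      rw [if_pos rfl]
      have : (2 + y) / 3 - (2 * (1/3) + 1/3 * boolSum 2 (1/3) a)
          = (y - boolSum 2 (1/3) a) / 3 := by ring
      rw [this, abs_div, abs_of_nonneg (by norm_num : (0:ℝ) ≤ 3), pow_succ]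
      calc |y - boolSum 2 (1/3) a| / 3 ≤ (1/3)^m / 3 := by
            exact div_le_div_of_nonneg_right ha (by norm_num) |>.trans_eq rfl
        _ = (1/3)^m * (1/3) := by ring

lemma range_boolSum_cantor : Set.range (boolSum 2 (1/3)) = cantorSet := by
  apply Set.Subset.antisymm
  · rintro _ ⟨a, rfl⟩
    exact Set.mem_iInter.mpr fun m => boolSum_cantor_mem_preCantorSet m a
  · intro x hx
    have hcont : Continuous (boolSum 2 (1/3)) :=
      continuous_boolSum (by norm_num) (by norm_num) (by norm_num)
    have hclosed : IsClosed (Set.range (boolSum 2 (1/3))) :=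
      (isCompact_range hcont).isClosed
    rw [← hclosed.closure_eq, Metric.mem_closure_iff]
    intro ε hε
    obtain ⟨m, hm⟩ : ∃ m : ℕ, (1/3:ℝ) ^ m < ε := by
      exact exists_pow_lt_of_lt_one hε (by norm_num)
    obtain ⟨a, ha⟩ := approx_cantor m x (Set.mem_iInter.mp hx m)
    exact ⟨boolSum 2 (1/3) a, ⟨a, rfl⟩, by rw [Real.dist_eq]; exact lt_of_le_of_lt ha hm⟩

/-! ### The achievement set side -/

lemma range_boolSum_achievement (r : ℝ) :
    Set.range (boolSum 1 r) = achievementSet (fun n => r ^ (n + 1)) := by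
  ext s
  constructor
  · rintro ⟨a, rfl⟩
    refine ⟨fun n => if a n then 1 else 0, fun n => by by_cases h : a n <;> simp [h], ?_⟩
    rw [boolSum]
    refine tsum_congr fun n => ?_
    by_cases h : a n <;> simp [h]
  · rintro ⟨ε, hε, rfl⟩
    refine ⟨fun n => decide (ε n = 1), ?_⟩
    rw [boolSum]
    refine tsum_congr fun n => ?_
    rcases hε n with h | h <;> simp [h]

/-- For `0 < r < 1/2`, the achievement set of the geometric sequence `x(n) = r^n` (`n ≥ 1`)
is homeomorphic to the Cantor ternary set. -/
theorem achievementSet_geometric_homeomorph_cantorSet (r : ℝ) (hr0 : 0 < r) (hr : r < 1 / 2) :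
    Nonempty (↥(achievementSet (fun n => r ^ (n + 1))) ≃ₜ ↥cantorSet) := by
  have hr1 : r < 1 := by linarith
  have e1 : (ℕ → Bool) ≃ₜ ↥(Set.range (boolSum 1 r)) :=
    Topology.IsEmbedding.toHomeomorph
      (((continuous_boolSum (by norm_num) hr0.le hr1).isClosedEmbedding
        (boolSum_injective one_pos hr0 hr)).isEmbedding)
  have e2 : (ℕ → Bool) ≃ₜ ↥(Set.range (boolSum 2 (1/3))) :=
    Topology.IsEmbedding.toHomeomorph
      (((continuous_boolSum (by norm_num) (by norm_num) (by norm_num)).isClosedEmbedding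
        (boolSum_injective (by norm_num) (by norm_num) (by norm_num))).isEmbedding)
  exact ⟨(Homeomorph.setCongr (range_boolSum_achievement r).symm).trans
    (e1.symm.trans (e2.trans (Homeomorph.setCongr range_boolSum_cantor)))⟩
end

section
/- (Kakeya) For any sequence x : ℕ → ℝ of positive terms with Σ_{n≥1} x_n < ∞, the achievement set E(x) is a perfect set: it is compact and has no isolated points. -/
private lemma summable_aux {x : ℕ → ℝ} (hpos : ∀ n, 0 < x n) (hsum : Summable x)
    {ε : ℕ → ℝ} (hε : ∀ n, ε n = 0 ∨ ε n = 1) : Summable (fun n => ε n * x n) := by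
  apply Summable.of_nonneg_of_le ?_ ?_ hsum
  · intro n; rcases hε n with h | h <;> simp [h, (hpos n).le]
  · intro n; rcases hε n with h | h <;> simp [h, (hpos n).le]

private lemma compact_aux (x : ℕ → ℝ) (hpos : ∀ n, 0 < x n) (hsum : Summable x) :
    IsCompact (achievementSet x) := by
  set S : Set (ℕ → ℝ) := Set.univ.pi (fun _ => ({0, 1} : Set ℝ)) with hS
  have hScomp : IsCompact S :=
    isCompact_univ_pi fun _ => (Set.toFinite ({0, 1} : Set ℝ)).isCompact
  have : CompactSpace S := isCompact_iff_compactSpace.mp hScomp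
  set F : S → ℝ := fun ε => ∑' n, ε.1 n * x n with hF
  have hmem : ∀ (ε : S) (n : ℕ), ε.1 n = 0 ∨ ε.1 n = 1 := by
    intro ε n
    have := ε.2 n (Set.mem_univ n)
    simpa using this
  have hcont : Continuous F := by
    apply continuous_tsum (f := fun n (ε : S) => ε.1 n * x n) (u := x) ?_ hsum
    · intro n ε
      rcases hmem ε n with h | h <;>
        simp [h, abs_of_nonneg (hpos n).le, (hpos n).le]
    · intro n
      exact ((continuous_apply n).comp continuous_subtype_val).mul continuous_const
  have heq : achievementSet x = Set.range F := by
    ext s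
    constructor
    · rintro ⟨ε, hε, rfl⟩
      refine ⟨⟨ε, ?_⟩, rfl⟩
      intro n _
      simpa using hε n
    · rintro ⟨ε, rfl⟩
      exact ⟨ε.1, hmem ε, rfl⟩
  rw [heq]
  exact isCompact_range hcont

/-- (Kakeya) For a summable sequence of positive terms, the achievement set is a perfect set:
compact with no isolated points. -/
theorem achievementSet_isCompact_perfect (x : ℕ → ℝ) (hpos : ∀ n, 0 < x n)
    (hsum : Summable x) :
    IsCompact (achievementSet x) ∧ Perfect (achievementSet x) := by
  have hcomp := compact_aux x hpos hsum
  refine ⟨hcomp, hcomp.isClosed, ?_⟩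
  intro s hs
  rw [accPt_iff_nhds]
  intro U hU
  obtain ⟨ε, hε, rfl⟩ := hs
  obtain ⟨δ, hδ, hball⟩ := Metric.mem_nhds_iff.mp hU
  have htend : Filter.Tendsto x Filter.atTop (nhds 0) := hsum.tendsto_atTop_zero
  obtain ⟨n, hn⟩ := (htend.eventually (gt_mem_nhds hδ)).exists
  set ε' : ℕ → ℝ := Function.update ε n (1 - ε n) with hε'def
  have hε' : ∀ m, ε' m = 0 ∨ ε' m = 1 := by
    intro m
    rcases eq_or_ne m n with rfl | h
    · rcases hε m with h | h <;> simp [hε'def, h]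
    · simp only [hε'def, Function.update_of_ne h]; exact hε m
  have hsum1 := summable_aux hpos hsum hε
  have hsum2 := summable_aux hpos hsum hε'
  have hdiff : (∑' m, ε' m * x m) - (∑' m, ε m * x m) = (1 - 2 * ε n) * x n := by
    rw [← Summable.tsum_sub hsum2 hsum1]
    have : ∀ m, ε' m * x m - ε m * x m = if m = n then (1 - 2 * ε n) * x n else 0 := by
      intro m
      rcases eq_or_ne m n with rfl | h
      · simp [hε'def]; ring
      · simp [hε'def, Function.update_of_ne h, h]
    calc ∑' m, (ε' m * x m - ε m * x m)
        = ∑' m, if m = n then (1 - 2 * ε n) * x n else 0 := by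
          exact tsum_congr this
      _ = (1 - 2 * ε n) * x n := by
          rw [tsum_eq_single n (by intro m hm; simp [hm])]; simp
  refine ⟨∑' m, ε' m * x m, ⟨?_, ⟨ε', hε', rfl⟩⟩, ?_⟩
  · apply hball
    have habs : |(∑' m, ε' m * x m) - (∑' m, ε m * x m)| = x n := by
      rw [hdiff, abs_mul, abs_of_nonneg (hpos n).le]
      rcases hε n with h | h <;> simp [h] <;> norm_num
    rw [Metric.mem_ball, Real.dist_eq, habs]
    exact hn
  · intro hcontra
    rw [hcontra, sub_self] at hdiff
    have : (1 - 2 * ε n) ≠ 0 := by rcases hε n with h | h <;> simp [h] <;> norm_num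
    exact (hpos n).ne' (by
      have := hdiff.symm
      rcases mul_eq_zero.mp this with h | h
      · exact absurd h ‹_›
      · exact h)
end

section
/- (Kakeya) Let x : ℕ → ℝ be a sequence of positive terms with Σ_{n≥1} x_n < ∞ and tails R_n = Σ_{i>n} x_i. If x_n ≤ R_n for all sufficiently large n, then the achievement set E(x) is a finite union of closed bounded intervals. -/
/-- The `n`-th tail `R_n = ∑_{i > n} x_i` of a sequence (indices `0,1,2,…` denote the
terms `x_1, x_2, x_3, …`). -/
noncomputable def seqTail (x : ℕ → ℝ) (n : ℕ) : ℝ := ∑' i : ℕ, x (n + 1 + i)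

/-- `A` is a finite union of closed bounded intervals. -/
def IsFiniteUnionOfClosedIntervals (A : Set ℝ) : Prop :=
  ∃ s : Finset (ℝ × ℝ), A = ⋃ p ∈ s, Set.Icc p.1 p.2

lemma summable_eps (x : ℕ → ℝ) (hpos : ∀ n, 0 ≤ x n) (hsum : Summable x)
    (ε : ℕ → ℝ) (hε : ∀ n, ε n = 0 ∨ ε n = 1) : Summable (fun n => ε n * x n) := by
  apply Summable.of_nonneg_of_le (fun n => ?_) (fun n => ?_) hsum
  · rcases hε n with h'|h' <;> simp [h', hpos n]
  · rcases hε n with h'|h' <;> simp [h', hpos n]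

lemma core (x : ℕ → ℝ) (hpos : ∀ n, 0 ≤ x n) (hsum : Summable x)
    (h : ∀ n, x n ≤ ∑' i, x (n + 1 + i)) :
    achievementSet x = Set.Icc 0 (∑' n, x n) := by
  have hTsum : ∀ n, Summable (fun i => x (i + n)) := fun n => (summable_nat_add_iff n).2 hsum
  set T : ℕ → ℝ := fun n => ∑' i, x (i + n) with hTdef
  have hTrec : ∀ n, T n = x n + T (n + 1) := by
    intro n
    have h0 : T n = x (0 + n) + ∑' i, x ((i + 1) + n) := Summable.tsum_eq_zero_add (hTsum n)
    rw [h0]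
    congr 1
    · simp
    · exact tsum_congr fun i => by congr 1; omega
  have hT0 : Filter.Tendsto T Filter.atTop (nhds 0) := by
    simpa [hTdef] using tendsto_sum_nat_add x
  have hcond : ∀ n, x n ≤ T (n + 1) := by
    intro n
    calc x n ≤ ∑' i, x (n + 1 + i) := h n
    _ = T (n + 1) := tsum_congr fun i => by congr 1; omega
  ext s
  constructor
  · rintro ⟨ε, hε, rfl⟩
    constructor
    · exact tsum_nonneg (fun n => by rcases hε n with h'|h' <;> simp [h', hpos n])
    · exact Summable.tsum_le_tsum (fun n => by rcases hε n with h'|h' <;> simp [h', hpos n])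
        (summable_eps x hpos hsum ε hε) hsum
  · rintro ⟨hs0, hs1⟩
    set P : ℕ → ℝ := fun n => Nat.rec 0 (fun k Pk => Pk + (if Pk + x k ≤ s then x k else 0)) n
      with hPdef
    set ε : ℕ → ℝ := fun n => if P n + x n ≤ s then 1 else 0 with hεdef
    have hεval : ∀ n, ε n = 0 ∨ ε n = 1 := by
      intro n; rw [hεdef]; dsimp only; split <;> simp
    have hPsucc : ∀ n, P (n + 1) = P n + ε n * x n := by
      intro n; rw [hPdef, hεdef]; dsimp only; split <;> simp
    have hinv : ∀ n, 0 ≤ s - P n ∧ s - P n ≤ T n := by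
      intro n
      induction n with
      | zero =>
        refine ⟨by simpa [hPdef] using hs0, ?_⟩
        have : T 0 = ∑' n, x n := tsum_congr fun i => by simp
        simpa [hPdef, this] using hs1
      | succ n ih =>
        rw [hPsucc n, hεdef]
        dsimp only
        split
        · rename_i hc
          constructor
          · simp; linarith
          · have := ih.2
            rw [hTrec n] at this
            simp; linarith
        · rename_i hc
          push_neg at hc
          constructor
          · simp; linarith [ih.1]
          · have := hcond n
            simp; linarith
    have hPsum : ∀ n, P n = ∑ i ∈ Finset.range n, ε i * x i := by
      intro n
      induction n with
      | zero => simp [hPdef]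
      | succ n ih => rw [hPsucc n, Finset.sum_range_succ, ih]
    have hPtend : Filter.Tendsto P Filter.atTop (nhds s) := by
      have hsq : Filter.Tendsto (fun n => s - P n) Filter.atTop (nhds 0) :=
        squeeze_zero (fun n => (hinv n).1) (fun n => (hinv n).2) hT0
      have := Filter.Tendsto.const_sub s hsq
      simpa using this
    have hS : Summable (fun n => ε n * x n) := summable_eps x hpos hsum ε hεval
    have hlim : Filter.Tendsto (fun n => ∑ i ∈ Finset.range n, ε i * x i)
        Filter.atTop (nhds (∑' n, ε n * x n)) := hS.hasSum.tendsto_sum_nat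
    have : (∑' n, ε n * x n) = s := by
      apply tendsto_nhds_unique _ hPtend
      simpa [← hPsum] using hlim
    exact ⟨ε, hεval, this.symm⟩

/-- (Kakeya) If `x_n ≤ R_n` for all sufficiently large `n`, then the achievement set is a
finite union of closed bounded intervals. -/
theorem achievementSet_finite_union_of_le_tail (x : ℕ → ℝ) (hpos : ∀ n, 0 < x n)
    (hsum : Summable x) (h : ∀ᶠ n in Filter.atTop, x n ≤ seqTail x n) :
    IsFiniteUnionOfClosedIntervals (achievementSet x) := by
  obtain ⟨N, hN⟩ := Filter.eventually_atTop.1 h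
  set y : ℕ → ℝ := fun i => x (i + N) with hy
  have hysum : Summable y := (summable_nat_add_iff N).2 hsum
  have hypos : ∀ n, 0 ≤ y n := fun n => (hpos _).le
  have hycond : ∀ n, y n ≤ ∑' i, y (n + 1 + i) := by
    intro n
    have h1 : x (n + N) ≤ seqTail x (n + N) := hN _ (by omega)
    calc y n = x (n + N) := rfl
    _ ≤ seqTail x (n + N) := h1
    _ = ∑' i, y (n + 1 + i) := tsum_congr fun i => by simp [hy]; congr 1; omega
  have hcore : achievementSet y = Set.Icc 0 (∑' n, y n) := core y hypos hysum hycond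
  set T : ℝ := ∑' n, y n with hT
  set c : Finset ℕ → ℝ := fun S => ∑ i ∈ S, x i with hc
  refine ⟨(Finset.range N).powerset.image (fun S => (c S, c S + T)), ?_⟩
  ext s
  simp only [Set.mem_iUnion, Finset.mem_image, Finset.mem_powerset, exists_prop]
  constructor
  · rintro ⟨ε, hε, rfl⟩
    have hf : Summable (fun n => ε n * x n) := summable_eps x (fun n => (hpos n).le) hsum ε hε
    refine ⟨(c ((Finset.range N).filter (fun i => ε i = 1)),
      c ((Finset.range N).filter (fun i => ε i = 1)) + T),
      ⟨(Finset.range N).filter (fun i => ε i = 1), Finset.filter_subset _ _, rfl⟩, ?_⟩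
    have hsplit : (∑' n, ε n * x n)
        = ∑ i ∈ Finset.range N, ε i * x i + ∑' i, ε (i + N) * x (i + N) :=
      (Summable.sum_add_tsum_nat_add N hf).symm
    have hsum1 : ∑ i ∈ Finset.range N, ε i * x i
        = c ((Finset.range N).filter (fun i => ε i = 1)) := by
      rw [hc]
      dsimp only
      rw [Finset.sum_filter]
      apply Finset.sum_congr rfl
      intro i _
      rcases hε i with h'|h' <;> simp [h']
    have hmem : (∑' i, ε (i + N) * x (i + N)) ∈ achievementSet y :=
      ⟨fun i => ε (i + N), fun i => hε _, rfl⟩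
    rw [hcore] at hmem
    rw [hsplit, hsum1]
    simp only [Set.mem_Icc] at hmem
    refine ⟨?_, ?_⟩ <;> dsimp only
    · linarith [hmem.1]
    · linarith [hmem.2]
  · rintro ⟨p, ⟨S, hS, rfl⟩, hsmem⟩
    simp only [Set.mem_Icc] at hsmem
    have hmem : s - c S ∈ achievementSet y := by
      rw [hcore]
      exact ⟨by linarith [hsmem.1], by linarith [hsmem.2]⟩
    obtain ⟨δ, hδ, hδeq⟩ := hmem
    set ε : ℕ → ℝ := fun n => if hn : n < N then (if n ∈ S then 1 else 0) else δ (n - N)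
      with hε
    have hεval : ∀ n, ε n = 0 ∨ ε n = 1 := by
      intro n; rw [hε]; dsimp only
      split
      · split <;> simp
      · exact hδ _
    refine ⟨ε, hεval, ?_⟩
    have hf : Summable (fun n => ε n * x n) := summable_eps x (fun n => (hpos n).le) hsum ε hεval
    have hsplit : (∑' n, ε n * x n)
        = ∑ i ∈ Finset.range N, ε i * x i + ∑' i, ε (i + N) * x (i + N) :=
      (Summable.sum_add_tsum_nat_add N hf).symm
    have hsum1 : ∑ i ∈ Finset.range N, ε i * x i = c S := by
      have h1 : ∀ i ∈ Finset.range N, ε i * x i = if i ∈ S then x i else 0 := by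
        intro i hi
        rw [hε]
        simp only [Finset.mem_range] at hi
        dsimp only
        rw [dif_pos hi]
        split <;> simp
      rw [Finset.sum_congr rfl h1, ← Finset.sum_filter, Finset.filter_mem_eq_inter,
        Finset.inter_eq_right.2 hS]
    have hsum2 : (∑' i, ε (i + N) * x (i + N)) = ∑' n, δ n * y n := by
      apply tsum_congr
      intro i
      rw [hε]
      dsimp only
      rw [dif_neg (by omega)]
      show δ (i + N - N) * x (i + N) = δ i * x (i + N)
      rw [Nat.add_sub_cancel]
    rw [hsplit, hsum1, hsum2, ← hδeq]
    ring
end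

section
/- (Kakeya) Let x : ℕ → ℝ be a sequence of positive terms with Σ_{n≥1} x_n < ∞ and tails R_n = Σ_{i>n} x_i. If x_n > R_n for all sufficiently large n, then the achievement set E(x) is homeomorphic to the Cantor ternary set. -/
open Filter Topology Set

namespace KakeyaAux


noncomputable def subSum (x : ℕ → ℝ) (b : ℕ → Bool) : ℝ := ∑' n, (if b n then x n else 0)

lemma summable_ind (x : ℕ → ℝ) (hsum : Summable x) (b : ℕ → Bool) :
    Summable (fun n => if b n then x n else 0) := by
  apply Summable.of_norm_bounded hsum.norm
  intro n
  by_cases hb : b n <;> simp [hb]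

lemma achievementSet_eq_range (x : ℕ → ℝ) :
    achievementSet x = Set.range (subSum x) := by
  ext s
  constructor
  · rintro ⟨ε, hε, rfl⟩
    refine ⟨fun n => decide (ε n = 1), ?_⟩
    unfold subSum
    apply tsum_congr
    intro n
    rcases hε n with h | h <;> simp [h]
  · rintro ⟨b, rfl⟩
    refine ⟨fun n => if b n then 1 else 0, fun n => ?_, ?_⟩
    · by_cases hb : b n <;> simp [hb]
    · unfold subSum
      apply tsum_congr
      intro n
      by_cases hb : b n <;> simp [hb]

lemma continuous_subSum (x : ℕ → ℝ) (hsum : Summable x) : Continuous (subSum x) := by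
  apply continuous_tsum (u := fun n => ‖x n‖) ?_ hsum.norm ?_
  · intro i
    exact (continuous_of_discreteTopology (α := Bool)
      (f := fun v : Bool => if v then x i else 0)).comp (continuous_apply i)
  · intro n b
    by_cases hb : b n <;> simp [hb]

lemma isCompact_achievementSet (x : ℕ → ℝ) (hsum : Summable x) :
    IsCompact (achievementSet x) := by
  rw [achievementSet_eq_range]
  exact isCompact_range (continuous_subSum x hsum)

lemma zero_mem_achievementSet (x : ℕ → ℝ) : (0:ℝ) ∈ achievementSet x := by
  rw [achievementSet_eq_range]
  exact ⟨fun _ => false, by simp [subSum]⟩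

lemma achievementSet_subset_Icc (x : ℕ → ℝ) (hpos : ∀ n, 0 ≤ x n) (hsum : Summable x) :
    achievementSet x ⊆ Set.Icc 0 (∑' n, x n) := by
  rw [achievementSet_eq_range]
  rintro s ⟨b, rfl⟩
  constructor
  · apply tsum_nonneg
    intro n; by_cases hb : b n <;> simp [hb, hpos n]
  · apply Summable.tsum_le_tsum _ (summable_ind x hsum b) hsum
    intro n; by_cases hb : b n <;> simp [hb, hpos n]


lemma subSum_update (x : ℕ → ℝ) (hsum : Summable x) (b : ℕ → Bool) (n : ℕ) :
    subSum x (Function.update b n (!b n)) =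
      subSum x b + (if b n then -x n else x n) := by
  unfold subSum
  have key : (fun i => if Function.update b n (!b n) i then x i else 0) =
      (fun i => (if b i then x i else 0) + (if i = n then (if b n then -x n else x n) else 0)) := by
    funext i
    by_cases hi : i = n
    · subst hi
      simp only [Function.update_self]
      cases hb : b i <;> simp [hb]
    · simp [Function.update_of_ne hi, hi]
  rw [key, Summable.tsum_add (summable_ind x hsum b) ⟨_, hasSum_ite_eq n _⟩, tsum_ite_eq]

lemma perfect_achievementSet (x : ℕ → ℝ) (hpos : ∀ n, 0 < x n) (hsum : Summable x)
    {z : ℝ} (hz : z ∈ achievementSet x) {δ : ℝ} (hδ : 0 < δ) :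
    ∃ w ∈ achievementSet x, w ≠ z ∧ |w - z| < δ := by
  rw [achievementSet_eq_range] at hz
  obtain ⟨b, rfl⟩ := hz
  obtain ⟨n, hn⟩ : ∃ n, |x n| < δ := by
    have h1 := Metric.tendsto_nhds.mp hsum.tendsto_atTop_zero δ hδ
    simpa [Real.dist_eq] using h1.exists
  refine ⟨subSum x (Function.update b n (!b n)), ?_, ?_, ?_⟩
  · rw [achievementSet_eq_range]; exact ⟨_, rfl⟩
  · rw [subSum_update x hsum b n]
    have hx := (hpos n).ne'
    cases hb : b n <;> simp [hb] <;> intro hc <;> simp_all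
  · rw [subSum_update x hsum b n]
    have : |(if b n then -x n else x n)| = |x n| := by
      cases hb : b n <;> simp [hb]
    simpa [this] using hn

/-- the `m`-shifted sequence -/
def shf (x : ℕ → ℝ) (m : ℕ) : ℕ → ℝ := fun i => x (i + m)

variable {x : ℕ → ℝ}

lemma summable_shf (hsum : Summable x) (m : ℕ) : Summable (shf x m) :=
  (summable_nat_add_iff m).2 hsum

noncomputable def RR (x : ℕ → ℝ) (m : ℕ) : ℝ := ∑' i, shf x m i

lemma seqTail_eq_RR (n : ℕ) : seqTail x n = RR x (n + 1) := by
  unfold seqTail RR shf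
  exact tsum_congr fun i => by rw [Nat.add_comm i (n+1)]

lemma RR_tendsto_zero (hsum : Summable x) : Tendsto (RR x) atTop (𝓝 0) := by
  have := tendsto_sum_nat_add x
  exact this

lemma subSum_shf_succ (hsum : Summable x) (m : ℕ) (b : ℕ → Bool) :
    subSum (shf x m) b =
      (if b 0 then x m else 0) + subSum (shf x (m+1)) (fun i => b (i+1)) := by
  unfold subSum
  rw [Summable.tsum_eq_zero_add (summable_ind _ (summable_shf hsum m) b)]
  congr 1
  · simp [shf]
  · apply tsum_congr
    intro i
    have : shf x m (i + 1) = shf x (m + 1) i := by unfold shf; congr 1; omega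
    rw [this]

lemma achievementSet_shf_decomp (hsum : Summable x) (m : ℕ) :
    achievementSet (shf x m) = achievementSet (shf x (m+1)) ∪
      (fun s => x m + s) '' achievementSet (shf x (m+1)) := by
  simp only [achievementSet_eq_range]
  ext s
  constructor
  · rintro ⟨b, rfl⟩
    rw [subSum_shf_succ hsum m b]
    cases hb : b 0
    · left; rw [if_neg (by simp [hb])]; rw [zero_add]; exact ⟨_, rfl⟩
    · right; exact ⟨_, ⟨_, rfl⟩, by rw [if_pos (by simp [hb])]⟩
  · rintro (⟨b, rfl⟩ | ⟨s', ⟨b, rfl⟩, rfl⟩)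
    · refine ⟨fun i => Nat.casesOn i false b, ?_⟩
      rw [subSum_shf_succ hsum m]
      simp
    · refine ⟨fun i => Nat.casesOn i true b, ?_⟩
      rw [subSum_shf_succ hsum m]
      simp

lemma descent_step (hpos : ∀ n, 0 < x n) (hsum : Summable x) {m : ℕ}
    (hm : RR x (m+1) < x m) {a b c : ℝ} (hab : a < b)
    (hsub : Icc a b ⊆ (fun s => c + s) '' achievementSet (shf x m)) :
    ∃ c', Icc a b ⊆ (fun s => c' + s) '' achievementSet (shf x (m+1)) := by
  have hIcc : achievementSet (shf x (m+1)) ⊆ Icc 0 (RR x (m+1)) :=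
    achievementSet_subset_Icc _ (fun n => (hpos _).le) (summable_shf hsum (m+1))
  set A1 := achievementSet (shf x (m+1))
  have hdec : ∀ z ∈ Icc a b, (z ∈ (fun s => c + s) '' A1) ∨
      (z ∈ (fun s => (c + x m) + s) '' A1) := by
    intro z hz
    obtain ⟨s, hs, rfl⟩ := hsub hz
    rw [achievementSet_shf_decomp hsum m] at hs
    rcases hs with hs | ⟨s', hs', rfl⟩
    · exact Or.inl ⟨s, hs, rfl⟩
    · exact Or.inr ⟨s', hs', by simp; ring⟩
  -- the gap point
  set t := c + (RR x (m+1) + x m) / 2 with ht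
  have htlow : ∀ z ∈ (fun s => c + s) '' A1, z < t := by
    rintro z ⟨s, hs, rfl⟩
    have := (hIcc hs).2
    simp only [ht]
    linarith
  have hthigh : ∀ z ∈ (fun s => (c + x m) + s) '' A1, t < z := by
    rintro z ⟨s, hs, rfl⟩
    have := (hIcc hs).1
    simp only [ht]
    linarith
  by_cases hbt : b ∈ (fun s => c + s) '' A1
  · -- everything in the low part
    refine ⟨c, fun z hz => ?_⟩
    rcases hdec z hz with h | h
    · exact h
    · exfalso
      have h1 : t < z := hthigh z h
      have h2 : b < t := htlow b hbt
      have := hz.2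
      linarith
  · -- b is in high part; claim all of Icc is in high part
    have hbt' : b ∈ (fun s => (c + x m) + s) '' A1 := by
      rcases hdec b ⟨hab.le, le_refl b⟩ with h | h
      · exact absurd h hbt
      · exact h
    clear hbt
    by_cases hat : a ∈ (fun s => (c + x m) + s) '' A1
    · refine ⟨c + x m, fun z hz => ?_⟩
      rcases hdec z hz with h | h
      · exfalso
        have h1 : z < t := htlow z h
        have h2 : t < a := hthigh a hat
        have := hz.1
        linarith
      · exact h
    · exfalso
      have hat' : a ∈ (fun s => c + s) '' A1 := by
        rcases hdec a ⟨le_refl a, hab.le⟩ with h | h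
        · exact h
        · exact absurd h hat
      -- then t ∈ Icc a b but in neither part
      have h1 : a < t := htlow a hat'
      have h2 : t < b := hthigh b hbt'
      rcases hdec t ⟨h1.le, h2.le⟩ with h | h
      · exact absurd (htlow t h) (lt_irrefl t)
      · exact absurd (hthigh t h) (lt_irrefl t)


lemma no_interval (hpos : ∀ n, 0 < x n) (hsum : Summable x) {N : ℕ}
    (hN : ∀ n, N ≤ n → seqTail x n < x n) {a b : ℝ} (hab : a < b) :
    ¬ (Icc a b ⊆ achievementSet (shf x N)) := by
  intro hsub
  have claim : ∀ k, ∃ c, Icc a b ⊆ (fun s => c + s) '' achievementSet (shf x (N + k)) := by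
    intro k
    induction k with
    | zero =>
      refine ⟨0, fun z hz => ⟨z, by simpa using hsub hz, by simp⟩⟩
    | succ k ih =>
      obtain ⟨c, hc⟩ := ih
      have hm : RR x (N + k + 1) < x (N + k) := by
        rw [← seqTail_eq_RR]
        exact hN _ (Nat.le_add_right N k)
      obtain ⟨c', hc'⟩ := descent_step hpos hsum hm hab hc
      exact ⟨c', hc'⟩
  have hba : ∀ k, b - a ≤ RR x (N + k) := by
    intro k
    obtain ⟨c, hc⟩ := claim k
    have hIcc : achievementSet (shf x (N+k)) ⊆ Icc 0 (RR x (N+k)) :=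
      achievementSet_subset_Icc _ (fun n => (hpos _).le) (summable_shf hsum _)
    obtain ⟨s1, hs1, h1⟩ := hc ⟨le_refl a, hab.le⟩
    obtain ⟨s2, hs2, h2⟩ := hc ⟨hab.le, le_refl b⟩
    have e1 := (hIcc hs1).1
    have e2 := (hIcc hs2).2
    simp only at h1 h2
    linarith [ (hIcc hs1).2, (hIcc hs2).1 ]
  have hlim : Tendsto (fun k => RR x (N + k)) atTop (𝓝 0) := by
    have h2 : Tendsto (fun k : ℕ => N + k) atTop atTop := by
      simpa [Nat.add_comm] using tendsto_add_atTop_nat N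
    exact (RR_tendsto_zero hsum).comp h2
  have : b - a ≤ 0 := ge_of_tendsto hlim (Filter.Eventually.of_forall hba)
  linarith

variable {x : ℕ → ℝ}

lemma subSum_head (hsum : Summable x) (N : ℕ) (b : ℕ → Bool) :
    subSum x b = (∑ i ∈ Finset.range N, if b i then x i else 0) +
      subSum (shf x N) (fun i => b (i + N)) := by
  unfold subSum
  rw [← Summable.sum_add_tsum_nat_add N (summable_ind x hsum b)]
  rfl

lemma interior_union_empty {s t : Set ℝ} (hs : IsClosed s)
    (h1 : interior s = ∅) (h2 : interior t = ∅) : interior (s ∪ t) = ∅ := by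
  have hop : IsOpen (interior (s ∪ t) \ s) := isOpen_interior.sdiff hs
  have hsub : interior (s ∪ t) \ s ⊆ t := by
    rintro z ⟨hz1, hz2⟩
    rcases interior_subset hz1 with h | h
    · exact absurd h hz2
    · exact h
  have : interior (s ∪ t) \ s ⊆ interior t := interior_maximal hsub hop
  rw [h2, subset_empty_iff, diff_eq_empty] at this
  have := interior_maximal this isOpen_interior
  rw [h1, subset_empty_iff] at this
  exact this

lemma interior_biUnion_empty {α : Type*} {H : Set α} (hH : H.Finite) {f : α → Set ℝ}
    (hcl : ∀ c ∈ H, IsClosed (f c)) (hint : ∀ c ∈ H, interior (f c) = ∅) :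
    interior (⋃ c ∈ H, f c) = ∅ := by
  revert hcl hint
  induction H, hH using Set.Finite.induction_on with
  | empty => simp
  | @insert a s ha hs ih =>
    intro hcl hint
    rw [Set.biUnion_insert]
    exact interior_union_empty (hcl a (mem_insert a s))
      (hint a (mem_insert a s))
      (ih (fun c hc => hcl c (mem_insert_of_mem a hc))
        (fun c hc => hint c (mem_insert_of_mem a hc)))

lemma interior_shfN_empty (hpos : ∀ n, 0 < x n) (hsum : Summable x) {N : ℕ}
    (hN : ∀ n, N ≤ n → seqTail x n < x n) :
    interior (achievementSet (shf x N)) = ∅ := by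
  by_contra hne
  obtain ⟨z, hz⟩ := nonempty_iff_ne_empty.2 hne
  rw [mem_interior_iff_mem_nhds, Metric.mem_nhds_iff] at hz
  obtain ⟨ε, hε, hball⟩ := hz
  refine no_interval hpos hsum hN (show z < z + ε/2 by linarith) ?_
  intro w hw
  apply hball
  rw [Metric.mem_ball, Real.dist_eq]
  have := hw.1; have := hw.2
  rw [abs_sub_lt_iff]
  constructor <;> linarith

lemma interior_achievementSet_empty (hpos : ∀ n, 0 < x n) (hsum : Summable x)
    (h : ∀ᶠ n in Filter.atTop, seqTail x n < x n) :
    interior (achievementSet x) = ∅ := by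
  obtain ⟨N, hN⟩ := eventually_atTop.mp h
  set H : Set ℝ := (fun F : Finset ℕ => ∑ i ∈ F, x i) '' {F | F ⊆ Finset.range N} with hH
  have hHfin : H.Finite := by
    apply Set.Finite.image
    have : {F | F ⊆ Finset.range N} = ↑(Finset.range N).powerset := by
      ext F; simp only [Finset.coe_powerset, Set.mem_preimage, Set.mem_powerset_iff,
        Finset.coe_subset, Set.mem_setOf_eq]
    rw [this]
    exact (Finset.range N).powerset.finite_toSet
  have hEsub : achievementSet x ⊆ ⋃ c ∈ H, (fun s => c + s) '' achievementSet (shf x N) := by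
    rw [achievementSet_eq_range]
    rintro s ⟨b, rfl⟩
    rw [subSum_head hsum N b]
    have hc : (∑ i ∈ Finset.range N, if b i then x i else 0) ∈ H := by
      refine ⟨(Finset.range N).filter (fun i => b i), Finset.filter_subset _ _, ?_⟩
      simp only []
      rw [Finset.sum_filter]
    refine Set.mem_biUnion hc ⟨_, ?_, rfl⟩
    rw [achievementSet_eq_range]
    exact ⟨_, rfl⟩
  have hintS : interior (⋃ c ∈ H, (fun s => c + s) '' achievementSet (shf x N)) = ∅ := by
    apply interior_biUnion_empty hHfin
    · intro c _
      exact (((isCompact_achievementSet _ (summable_shf hsum N)).image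
        (continuous_const.add continuous_id)).isClosed)
    · intro c _
      have himg : (fun s => c + s) '' achievementSet (shf x N) =
          (Homeomorph.addLeft c) '' achievementSet (shf x N) := rfl
      rw [himg, ← Homeomorph.image_interior, interior_shfN_empty hpos hsum hN]
      simp
  have := interior_mono hEsub
  rw [hintS, subset_empty_iff] at this
  exact this

lemma gap_achievementSet (hpos : ∀ n, 0 < x n) (hsum : Summable x)
    (h : ∀ᶠ n in Filter.atTop, seqTail x n < x n) {a b : ℝ}
    (hab : a < b) : ∃ t, t ∉ achievementSet x ∧ a < t ∧ t < b := by
  by_contra hc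
  push_neg at hc
  have hIoo : Ioo a b ⊆ achievementSet x := by
    intro t ht
    by_contra hnt
    exact (hc t hnt ht.1).not_gt ht.2
  have := interior_maximal hIoo isOpen_Ioo
  rw [interior_achievementSet_empty hpos hsum h, subset_empty_iff] at this
  exact absurd this (nonempty_iff_ne_empty.1 (nonempty_Ioo.2 hab))
/-- A "Cantor-like" subset of `ℝ`: nonempty, compact, perfect, and with gaps between
any two of its points. -/
def Cantorish (K : Set ℝ) : Prop :=
  IsCompact K ∧ K.Nonempty ∧
    (∀ z ∈ K, ∀ δ > 0, ∃ w ∈ K, w ≠ z ∧ |w - z| < δ) ∧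
    (∀ a ∈ K, ∀ b ∈ K, a < b → ∃ t, t ∉ K ∧ a < t ∧ t < b)

/-- Invariant for pieces: nonempty, closed, and relatively open in `K`. -/
def Inv (K P : Set ℝ) : Prop :=
  P.Nonempty ∧ IsClosed P ∧ ∃ U, IsOpen U ∧ P = K ∩ U

lemma Inv.nonempty {K P : Set ℝ} (h : Inv K P) : P.Nonempty := h.1

lemma Inv.subset {K P : Set ℝ} (h : Inv K P) : P ⊆ K := by
  obtain ⟨_, _, U, _, rfl⟩ := h
  exact inter_subset_left

lemma Inv.isCompact {K P : Set ℝ} (hK : IsCompact K) (h : Inv K P) : IsCompact P :=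
  hK.of_isClosed_subset h.2.1 h.subset

lemma inv_self {K : Set ℝ} (hC : Cantorish K) : Inv K K :=
  ⟨hC.2.1, hC.1.isClosed, univ, isOpen_univ, (inter_univ K).symm⟩

lemma Inv.sInf_mem {K P : Set ℝ} (hK : IsCompact K) (h : Inv K P) : sInf P ∈ P :=
  (h.isCompact hK).sInf_mem h.nonempty

lemma Inv.sSup_mem {K P : Set ℝ} (hK : IsCompact K) (h : Inv K P) : sSup P ∈ P :=
  (h.isCompact hK).sSup_mem h.nonempty

lemma Inv.pts_bound {K P : Set ℝ} (hK : IsCompact K) (h : Inv K P)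
    {z w : ℝ} (hz : z ∈ P) (hw : w ∈ P) : |z - w| ≤ sSup P - sInf P := by
  have hbA := (h.isCompact hK).bddAbove
  have hbB := (h.isCompact hK).bddBelow
  rw [abs_sub_le_iff]
  constructor
  · linarith [le_csSup hbA hz, csInf_le hbB hw]
  · linarith [le_csSup hbA hw, csInf_le hbB hz]

lemma inv_sInf_lt_sSup {K P : Set ℝ} (hC : Cantorish K) (h : Inv K P) :
    sInf P < sSup P := by
  obtain ⟨hK, hne, hperf, hgap⟩ := hC
  have h1 := h.sInf_mem hK
  have h2 := h.sSup_mem hK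
  rcases lt_or_ge (sInf P) (sSup P) with hlt | hle
  · exact hlt
  · exfalso
    -- P = {sInf P}
    have hsingle : ∀ z ∈ P, z = sInf P := by
      intro z hz
      have := csInf_le (h.isCompact hK).bddBelow hz
      have := le_csSup (h.isCompact hK).bddAbove hz
      linarith
    obtain ⟨_, _, U, hU, hPU⟩ := id h
    have haU : sInf P ∈ U := by
      have h1' : sInf P ∈ K ∩ U := by rw [← hPU]; exact h1
      exact h1'.2
    obtain ⟨δ, hδ, hball⟩ := Metric.isOpen_iff.1 hU _ haU
    obtain ⟨w, hwK, hwne, hwδ⟩ := hperf (sInf P) (h.subset h1) δ hδ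
    have hwP : w ∈ P := by
      rw [hPU]
      exact ⟨hwK, hball (by rwa [Metric.mem_ball, Real.dist_eq])⟩
    exact hwne (hsingle w hwP)

/-- The splitting predicate. -/
def SplitP (K P : Set ℝ) (t : ℝ) : Prop :=
  t ∉ P ∧ sInf P < t ∧ t < sSup P ∧
    t - sInf P ≤ 2/3 * (sSup P - sInf P) ∧ sSup P - t ≤ 2/3 * (sSup P - sInf P) ∧
    Inv K (P ∩ Iio t) ∧ Inv K (P ∩ Ioi t)

lemma exists_splitP {K P : Set ℝ} (hC : Cantorish K) (h : Inv K P) :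
    ∃ t, SplitP K P t := by
  obtain ⟨hK, hne, hperf, hgap⟩ := hC
  set a := sInf P with ha
  set b := sSup P with hb
  have hd : a < b := inv_sInf_lt_sSup ⟨hK, hne, hperf, hgap⟩ h
  set u := a + (b - a)/3 with hu
  set v := b - (b - a)/3 with hv
  have huv : u < v := by simp only [hu, hv]; linarith
  have hau : a < u := by simp only [hu]; linarith
  have hvb : v < b := by simp only [hv]; linarith
  have hmid : ∃ t ∈ Icc u v, t ∉ P := by
    by_contra hcon
    push_neg at hcon
    have hIP : Icc u v ⊆ P := fun t ht => hcon t ht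
    obtain ⟨t, htK, hut, htv⟩ := hgap u (h.subset (hIP ⟨le_refl u, huv.le⟩))
      v (h.subset (hIP ⟨huv.le, le_refl v⟩)) huv
    exact htK (h.subset (hIP ⟨hut.le, htv.le⟩))
  obtain ⟨t, ⟨hut, htv⟩, htP⟩ := hmid
  obtain ⟨hPne, hPcl, U, hU, hPU⟩ := id h
  have hinv1 : Inv K (P ∩ Iio t) := by
    refine ⟨⟨a, h.sInf_mem hK, lt_of_lt_of_le hau hut⟩, ?_, U ∩ Iio t, hU.inter isOpen_Iio, ?_⟩
    · have : P ∩ Iio t = P ∩ Iic t := by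
        ext z
        simp only [mem_inter_iff, mem_Iio, mem_Iic]
        refine ⟨fun ⟨h1, h2⟩ => ⟨h1, h2.le⟩, fun ⟨h1, h2⟩ => ⟨h1, lt_of_le_of_ne h2 ?_⟩⟩
        rintro rfl
        exact htP h1
      rw [this]
      exact hPcl.inter isClosed_Iic
    · rw [hPU, inter_assoc]
  have hinv2 : Inv K (P ∩ Ioi t) := by
    refine ⟨⟨b, h.sSup_mem hK, lt_of_le_of_lt htv hvb⟩, ?_, U ∩ Ioi t, hU.inter isOpen_Ioi, ?_⟩
    · have : P ∩ Ioi t = P ∩ Ici t := by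
        ext z
        simp only [mem_inter_iff, mem_Ioi, mem_Ici]
        refine ⟨fun ⟨h1, h2⟩ => ⟨h1, h2.le⟩, fun ⟨h1, h2⟩ => ⟨h1, lt_of_le_of_ne h2 ?_⟩⟩
        rintro rfl
        exact htP h1
      rw [this]
      exact hPcl.inter isClosed_Ici
    · rw [hPU, inter_assoc]
  refine ⟨t, htP, lt_of_lt_of_le hau hut, lt_of_le_of_lt htv hvb, ?_, ?_, hinv1, hinv2⟩
  · simp only [hu] at hut; simp only [hv] at htv; linarith
  · simp only [hu] at hut; simp only [hv] at htv; linarith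

open Classical in
/-- A chosen splitting point (0 when none exists). -/
noncomputable def splitPt (K P : Set ℝ) : ℝ :=
  if h : ∃ t, SplitP K P t then h.choose else 0

lemma splitPt_spec {K P : Set ℝ} (hC : Cantorish K) (h : Inv K P) :
    SplitP K P (splitPt K P) := by
  have he := exists_splitP hC h
  classical
  rw [splitPt]
  rw [dif_pos he]
  exact he.choose_spec

/-- The two children of a piece. -/
noncomputable def child (K P : Set ℝ) (b : Bool) : Set ℝ :=
  if b then P ∩ Ioi (splitPt K P) else P ∩ Iio (splitPt K P)

lemma inv_child {K P : Set ℝ} (hC : Cantorish K) (h : Inv K P) (b : Bool) :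
    Inv K (child K P b) := by
  have hs := splitPt_spec hC h
  cases b
  · have e : child K P false = P ∩ Iio (splitPt K P) := if_neg (by simp)
    rw [e]; exact hs.2.2.2.2.2.1
  · have e : child K P true = P ∩ Ioi (splitPt K P) := if_pos rfl
    rw [e]; exact hs.2.2.2.2.2.2

lemma child_subset {K P : Set ℝ} (b : Bool) : child K P b ⊆ P := by
  cases b <;> simp [child]

lemma child_union {K P : Set ℝ} (hC : Cantorish K) (h : Inv K P) :
    P = child K P false ∪ child K P true := by
  have hs := splitPt_spec hC h
  ext z
  simp only [child, if_neg (by simp : ¬ (false = true)), if_pos rfl, mem_union,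
    mem_inter_iff, mem_Iio, mem_Ioi]
  constructor
  · intro hz
    rcases lt_trichotomy z (splitPt K P) with hlt | heq | hgt
    · exact Or.inl ⟨hz, hlt⟩
    · exact absurd (heq ▸ hz) hs.1
    · exact Or.inr ⟨hz, hgt⟩
  · rintro (⟨hz, _⟩ | ⟨hz, _⟩) <;> exact hz

lemma child_wid {K P : Set ℝ} (hC : Cantorish K) (h : Inv K P) (b : Bool) :
    sSup (child K P b) - sInf (child K P b) ≤ 2/3 * (sSup P - sInf P) := by
  have hs := splitPt_spec hC h
  have hinv := inv_child hC h b
  have hcomp := hinv.isCompact hC.1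
  have hPcomp := h.isCompact hC.1
  cases b
  · -- child false = P ∩ Iio t
    have he : child K P false = P ∩ Iio (splitPt K P) := if_neg (by simp)
    have h1 : sSup (child K P false) ≤ splitPt K P := by
      apply csSup_le hinv.nonempty
      intro z hz
      rw [he] at hz
      exact hz.2.le
    have h2 : sInf P ≤ sInf (child K P false) := by
      apply le_csInf hinv.nonempty
      intro z hz
      exact csInf_le hPcomp.bddBelow (child_subset _ hz)
    have := hs.2.2.2.1
    linarith
  · have he : child K P true = P ∩ Ioi (splitPt K P) := if_pos rfl
    have h1 : splitPt K P ≤ sInf (child K P true) := by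
      apply le_csInf hinv.nonempty
      intro z hz
      rw [he] at hz
      exact hz.2.le
    have h2 : sSup (child K P true) ≤ sSup P := by
      apply csSup_le hinv.nonempty
      intro z hz
      exact le_csSup hPcomp.bddAbove (child_subset _ hz)
    have := hs.2.2.2.2.1
    linarith

/-- The piece assigned to a branch `ε` at depth `n`. -/
noncomputable def piece (K : Set ℝ) (ε : ℕ → Bool) : ℕ → Set ℝ
  | 0 => K
  | n+1 => child K (piece K ε n) (ε n)

lemma inv_piece {K : Set ℝ} (hC : Cantorish K) (ε : ℕ → Bool) (n : ℕ) :
    Inv K (piece K ε n) := by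
  induction n with
  | zero => exact inv_self hC
  | succ n ih => exact inv_child hC ih (ε n)

lemma piece_congr {K : Set ℝ} {ε ε' : ℕ → Bool} (n : ℕ)
    (hag : ∀ i < n, ε i = ε' i) : piece K ε n = piece K ε' n := by
  induction n with
  | zero => rfl
  | succ n ih =>
    show child K (piece K ε n) (ε n) = child K (piece K ε' n) (ε' n)
    rw [ih (fun i hi => hag i (Nat.lt_succ_of_lt hi)), hag n (Nat.lt_succ_self n)]

lemma piece_succ_subset {K : Set ℝ} (ε : ℕ → Bool) (n : ℕ) :
    piece K ε (n+1) ⊆ piece K ε n := child_subset _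

lemma piece_wid {K : Set ℝ} (hC : Cantorish K) (ε : ℕ → Bool) (n : ℕ) :
    sSup (piece K ε n) - sInf (piece K ε n) ≤ (2/3)^n * (sSup K - sInf K) := by
  induction n with
  | zero => simp [piece]
  | succ n ih =>
    have h1 := child_wid hC (inv_piece hC ε n) (ε n)
    have : (2:ℝ)/3 * (sSup (piece K ε n) - sInf (piece K ε n)) ≤
        2/3 * ((2/3)^n * (sSup K - sInf K)) := by linarith
    calc sSup (piece K ε (n+1)) - sInf (piece K ε (n+1)) ≤ _ := h1
    _ ≤ 2/3 * ((2/3)^n * (sSup K - sInf K)) := this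
    _ = (2/3)^(n+1) * (sSup K - sInf K) := by ring


lemma piece_inter_nonempty {K : Set ℝ} (hC : Cantorish K) (ε : ℕ → Bool) :
    (⋂ n, piece K ε n).Nonempty := by
  apply IsCompact.nonempty_iInter_of_sequence_nonempty_isCompact_isClosed
  · exact piece_succ_subset ε
  · exact fun n => (inv_piece hC ε n).nonempty
  · exact hC.1
  · exact fun n => (inv_piece hC ε n).2.1

open Classical in
/-- The point of `K` determined by the branch `ε`. -/
noncomputable def gfun (K : Set ℝ) (ε : ℕ → Bool) : ℝ :=
  if h : (⋂ n, piece K ε n).Nonempty then h.choose else 0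

lemma gfun_mem {K : Set ℝ} (hC : Cantorish K) (ε : ℕ → Bool) :
    gfun K ε ∈ ⋂ n, piece K ε n := by
  classical
  have h := piece_inter_nonempty hC ε
  rw [gfun, dif_pos h]
  exact h.choose_spec

lemma gfun_mem_K {K : Set ℝ} (hC : Cantorish K) (ε : ℕ → Bool) : gfun K ε ∈ K := by
  have := gfun_mem hC ε
  rw [mem_iInter] at this
  exact this 0

lemma gfun_dist {K : Set ℝ} (hC : Cantorish K) {ε ε' : ℕ → Bool} (n : ℕ)
    (hag : ∀ i < n, ε i = ε' i) :
    |gfun K ε - gfun K ε'| ≤ (2/3)^n * (sSup K - sInf K) := by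
  have h1 : gfun K ε ∈ piece K ε n := by
    have := gfun_mem hC ε; rw [mem_iInter] at this; exact this n
  have h2 : gfun K ε' ∈ piece K ε n := by
    have := gfun_mem hC ε'; rw [mem_iInter] at this
    rw [piece_congr n hag]; exact this n
  calc |gfun K ε - gfun K ε'| ≤ sSup (piece K ε n) - sInf (piece K ε n) :=
        (inv_piece hC ε n).pts_bound hC.1 h1 h2
  _ ≤ (2/3)^n * (sSup K - sInf K) := piece_wid hC ε n

lemma gfun_injective {K : Set ℝ} (hC : Cantorish K) : Function.Injective (gfun K) := by
  intro ε ε' heq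
  by_contra hne
  have hex : ∃ i, ε i ≠ ε' i := by
    by_contra hcon
    push_neg at hcon
    exact hne (funext hcon)
  classical
  set n := Nat.find hex with hn
  have hdiff : ε n ≠ ε' n := Nat.find_spec hex
  have hag : ∀ i < n, ε i = ε' i := fun i hi => by
    by_contra hcon
    exact absurd (Nat.find_le hcon : n ≤ i) (not_le.2 hi)
  have hPeq : piece K ε n = piece K ε' n := piece_congr n hag
  have h1 : gfun K ε ∈ child K (piece K ε n) (ε n) := by
    have := gfun_mem hC ε; rw [mem_iInter] at this; exact this (n+1)
  have h2 : gfun K ε' ∈ child K (piece K ε n) (ε' n) := by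
    have := gfun_mem hC ε'; rw [mem_iInter] at this
    have h2' := this (n+1)
    show gfun K ε' ∈ child K (piece K ε n) (ε' n)
    rw [hPeq]
    exact h2'
  set t := splitPt K (piece K ε n)
  have hfin : gfun K ε ≠ gfun K ε' := by
    cases hb : ε n <;> cases hb' : ε' n
    · rw [hb] at hdiff; rw [hb'] at hdiff; simp at hdiff
    · rw [hb] at h1; rw [hb'] at h2
      simp only [child, if_neg (by simp : ¬ (false = true)), if_pos rfl] at h1 h2
      exact ne_of_lt (lt_trans h1.2 h2.2)
    · rw [hb] at h1; rw [hb'] at h2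
      simp only [child, if_neg (by simp : ¬ (false = true)), if_pos rfl] at h1 h2
      exact ne_of_gt (lt_trans h2.2 h1.2)
    · rw [hb] at hdiff; rw [hb'] at hdiff; simp at hdiff
  exact hfin heq

lemma gfun_continuous {K : Set ℝ} (hC : Cantorish K) : Continuous (gfun K) := by
  rw [continuous_iff_continuousAt]
  intro ε
  rw [ContinuousAt, Metric.tendsto_nhds]
  intro δ hδ
  -- choose n with (2/3)^n * (sSup K - sInf K) < δ
  have hlim : Tendsto (fun n : ℕ => (2/3 : ℝ)^n * (sSup K - sInf K)) atTop (𝓝 0) := by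
    have := tendsto_pow_atTop_nhds_zero_of_lt_one (by norm_num : (0:ℝ) ≤ 2/3)
      (by norm_num : (2/3:ℝ) < 1)
    simpa using this.mul_const (sSup K - sInf K)
  obtain ⟨n, hn⟩ := (hlim.eventually (eventually_lt_nhds hδ)).exists
  have hsingle : ∀ i : ℕ, ∀ᶠ ε' in 𝓝 ε, ε' i = ε i := by
    intro i
    have ho : IsOpen ((fun f : ℕ → Bool => f i) ⁻¹' {ε i}) :=
      (isOpen_discrete {ε i}).preimage (continuous_apply i)
    exact eventually_of_mem (ho.mem_nhds rfl) (fun y hy => hy)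
  have hev : ∀ m, ∀ᶠ ε' in 𝓝 ε, ∀ i < m, ε' i = ε i := by
    intro m
    induction m with
    | zero => exact Eventually.of_forall (fun _ i hi => absurd hi (Nat.not_lt_zero i))
    | succ m ih =>
      filter_upwards [ih, hsingle m] with ε' h1 h2 i hi
      rcases Nat.lt_succ_iff_lt_or_eq.1 hi with hi | rfl
      · exact h1 i hi
      · exact h2
  filter_upwards [hev n] with ε' hε'
  rw [Real.dist_eq]
  calc |gfun K ε' - gfun K ε| ≤ (2/3)^n * (sSup K - sInf K) :=
        gfun_dist hC n (fun i hi => hε' i hi)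
  _ < δ := hn

lemma gfun_surjective {K : Set ℝ} (hC : Cantorish K) {z : ℝ} (hz : z ∈ K) :
    ∃ ε, gfun K ε = z := by
  classical
  -- one-step extension
  have step : ∀ (ε : ℕ → Bool) (n : ℕ), z ∈ piece K ε n →
      ∃ b, z ∈ child K (piece K ε n) b := by
    intro ε n hzn
    have hu := child_union hC (inv_piece hC ε n)
    rw [hu] at hzn
    rcases hzn with h | h
    · exact ⟨false, h⟩
    · exact ⟨true, h⟩
  -- build approximations
  let seq : ∀ n : ℕ, {ε : ℕ → Bool // z ∈ piece K ε n} := fun n =>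
    Nat.rec ⟨fun _ => false, hz⟩
      (fun k p =>
        ⟨Function.update p.1 k (step p.1 k p.2).choose, by
          have hspec := (step p.1 k p.2).choose_spec
          show z ∈ child K (piece K (Function.update p.1 k (step p.1 k p.2).choose) k)
            (Function.update p.1 k (step p.1 k p.2).choose k)
          rw [Function.update_self]
          rw [piece_congr (K := K) k
            (fun i hi => Function.update_of_ne (Nat.ne_of_lt hi) _ _)]
          exact hspec⟩) n
  set ε : ℕ → Bool := fun i => (seq (i+1)).1 i with hε
  have hagree : ∀ n, ∀ i < n, (seq n).1 i = ε i := by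
    intro n
    induction n with
    | zero => intro i hi; exact absurd hi (Nat.not_lt_zero i)
    | succ n ih =>
      intro i hi
      rcases Nat.lt_succ_iff_lt_or_eq.1 hi with hi' | rfl
      · have e1 : (seq (n+1)).1 i = (seq n).1 i :=
          Function.update_of_ne (Nat.ne_of_lt hi') _ _
        rw [e1, ih i hi']
      · rfl
  have hzn : ∀ n, z ∈ piece K ε n := by
    intro n
    have := (seq n).2
    rwa [piece_congr (K := K) n (fun i hi => hagree n i hi)] at this
  have hd : ∀ n, |gfun K ε - z| ≤ (2/3)^n * (sSup K - sInf K) := by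
    intro n
    have h1 : gfun K ε ∈ piece K ε n := by
      have := gfun_mem hC ε; rw [mem_iInter] at this; exact this n
    calc |gfun K ε - z| ≤ sSup (piece K ε n) - sInf (piece K ε n) :=
          (inv_piece hC ε n).pts_bound hC.1 h1 (hzn n)
    _ ≤ (2/3)^n * (sSup K - sInf K) := piece_wid hC ε n
  have hlim : Tendsto (fun n : ℕ => (2/3 : ℝ)^n * (sSup K - sInf K)) atTop (𝓝 0) := by
    have := tendsto_pow_atTop_nhds_zero_of_lt_one (by norm_num : (0:ℝ) ≤ 2/3)
      (by norm_num : (2/3:ℝ) < 1)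
    simpa using this.mul_const (sSup K - sInf K)
  have habs : |gfun K ε - z| ≤ 0 := ge_of_tendsto hlim (Eventually.of_forall hd)
  refine ⟨ε, ?_⟩
  have := abs_nonpos_iff.1 habs
  linarith [sub_eq_zero.1 this]

lemma cantorish_homeo {K : Set ℝ} (hC : Cantorish K) :
    Nonempty ((ℕ → Bool) ≃ₜ ↥K) := by
  have hbij : Function.Bijective (fun ε => (⟨gfun K ε, gfun_mem_K hC ε⟩ : ↥K)) := by
    constructor
    · intro a b hab
      exact gfun_injective hC (congrArg Subtype.val hab)
    · rintro ⟨z, hz⟩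
      obtain ⟨ε, hε⟩ := gfun_surjective hC hz
      exact ⟨ε, Subtype.ext hε⟩
  have hcont : Continuous (Equiv.ofBijective _ hbij) :=
    Continuous.subtype_mk (gfun_continuous hC) _
  exact ⟨hcont.homeoOfEquivCompactToT2⟩

/-- The ternary weights whose achievement set is the Cantor set. -/
noncomputable def terW : ℕ → ℝ := fun n => 2 / 3^(n+1)

lemma terW_pos : ∀ n, 0 < terW n := fun n => by unfold terW; positivity

lemma terW_eq (n : ℕ) : terW n = 2 * (1/3:ℝ)^(n+1) := by
  unfold terW; rw [div_eq_mul_inv, ← inv_pow]; norm_num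

lemma summable_terW : Summable terW := by
  have : Summable (fun n : ℕ => 2 * (1/3:ℝ)^(n+1)) := by
    apply Summable.mul_left
    exact (summable_geometric_of_lt_one (by norm_num) (by norm_num)).comp_injective
      (add_left_injective 1)
  exact this.congr (fun n => (terW_eq n).symm)

lemma tsum_terW_tail (m : ℕ) : ∑' i, terW (m + i) = 1 / 3^m := by
  have h1 : ∀ i, terW (m + i) = (2 / 3^(m+1)) * (1/3:ℝ)^i := by
    intro i
    unfold terW
    rw [div_mul_eq_mul_div, mul_comm]
    rw [show (1/3:ℝ)^i * 2 / 3^(m+1) = 2 / (3^(m+1) * 3^i) by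
      rw [div_pow]; ring_nf]
    congr 1
    rw [← pow_add]
    congr 1
    omega
  rw [tsum_congr h1, tsum_mul_left, tsum_geometric_of_lt_one (by norm_num) (by norm_num)]
  rw [show ((1:ℝ) - 1/3)⁻¹ = 3/2 by norm_num]
  rw [show (3:ℝ)^(m+1) = 3^m * 3 by ring]
  field_simp

lemma tsum_terW : ∑' n, terW n = 1 := by
  have := tsum_terW_tail 0
  simpa using this

lemma seqTail_terW_lt (n : ℕ) : seqTail terW n < terW n := by
  unfold seqTail
  rw [show (fun i => terW (n + 1 + i)) = fun i => terW ((n+1) + i) by rfl]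
  rw [tsum_terW_tail (n+1)]
  unfold terW
  rw [div_lt_div_iff₀ (by positivity) (by positivity)]
  nlinarith [pow_pos (show (0:ℝ) < 3 by norm_num) (n+1)]

lemma preCantorSet_subset_unit (n : ℕ) : preCantorSet n ⊆ Icc 0 1 := by
  induction n with
  | zero => exact subset_refl _
  | succ n ih =>
    rintro z (⟨w, hw, rfl⟩ | ⟨w, hw, rfl⟩)
    · obtain ⟨h1, h2⟩ := ih hw
      constructor <;> [linarith; linarith]
    · obtain ⟨h1, h2⟩ := ih hw
      constructor <;> [linarith; linarith]

lemma subSum_shf_terW (m : ℕ) (b : ℕ → Bool) :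
    subSum (shf terW (m+1)) b = (1/3) * subSum (shf terW m) b := by
  unfold subSum
  rw [← tsum_mul_left]
  apply tsum_congr
  intro n
  by_cases hb : b n
  · simp only [hb, if_true]
    unfold shf terW
    rw [show n + (m+1) + 1 = (n + m + 1) + 1 by omega]
    rw [show (3:ℝ)^(n+m+1+1) = 3^(n+m+1) * 3 by ring]
    field_simp
  · simp [hb]

lemma subSum_terW_bounds (b : ℕ → Bool) :
    subSum terW b ∈ Icc (0:ℝ) 1 := by
  constructor
  · apply tsum_nonneg
    intro n; by_cases hb : b n <;> simp [hb, (terW_pos n).le]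
  · rw [← tsum_terW]
    apply Summable.tsum_le_tsum _ (summable_ind _ summable_terW b) summable_terW
    intro n; by_cases hb : b n <;> simp [hb, (terW_pos n).le]

lemma subSum_terW_rec (b : ℕ → Bool) :
    subSum terW b = (if b 0 then (2:ℝ)/3 else 0) + (1/3) * subSum terW (fun i => b (i+1)) := by
  have h := subSum_shf_succ summable_terW 0 b
  rw [subSum_shf_terW 0 (fun i => b (i+1))] at h
  have h2 : terW 0 = (2:ℝ)/3 := by unfold terW; norm_num
  rw [h2] at h
  exact h

lemma subSum_mem_preCantorSet (n : ℕ) (b : ℕ → Bool) :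
    subSum terW b ∈ preCantorSet n := by
  induction n generalizing b with
  | zero => exact subSum_terW_bounds b
  | succ n ih =>
    rw [subSum_terW_rec b]
    cases hb : b 0
    · left
      exact ⟨subSum terW (fun i => b (i+1)), ih _, by simp [hb]; ring⟩
    · right
      exact ⟨subSum terW (fun i => b (i+1)), ih _, by simp [hb]; ring⟩

lemma achievementSet_terW_subset : achievementSet terW ⊆ cantorSet := by
  rw [achievementSet_eq_range]
  rintro s ⟨b, rfl⟩
  exact mem_iInter.2 (fun n => subSum_mem_preCantorSet n b)

-- self-similarity of the Cantor set
lemma cantorSet_self_similar {z : ℝ} (hz : z ∈ cantorSet) :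
    (z ≤ 1/2 ∧ 3*z ∈ cantorSet) ∨ (1/2 < z ∧ 3*z - 2 ∈ cantorSet) := by
  have hmem : ∀ n, z ∈ preCantorSet n := fun n => mem_iInter.1 hz n
  rcases le_or_gt z (1/2) with hle | hgt
  · left
    refine ⟨hle, mem_iInter.2 fun n => ?_⟩
    rcases hmem (n+1) with ⟨w, hw, hwz⟩ | ⟨w, hw, hwz⟩
    · have : 3 * z = w := by
        simp only at hwz
        rw [← hwz]; ring
      rwa [this]
    · exfalso
      obtain ⟨h1, _⟩ := preCantorSet_subset_unit n hw
      simp only at hwz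
      rw [← hwz] at hle
      linarith
  · right
    refine ⟨hgt, mem_iInter.2 fun n => ?_⟩
    rcases hmem (n+1) with ⟨w, hw, hwz⟩ | ⟨w, hw, hwz⟩
    · exfalso
      obtain ⟨_, h2⟩ := preCantorSet_subset_unit n hw
      simp only at hwz
      rw [← hwz] at hgt
      linarith
    · have : 3 * z - 2 = w := by
        simp only at hwz
        rw [← hwz]; ring
      rwa [this]

/-- The expansion map for the Cantor set. -/
noncomputable def cexp (z : ℝ) : ℝ := if z ≤ 1/2 then 3*z else 3*z - 2

noncomputable def citer (z : ℝ) : ℕ → ℝ := fun n => cexp^[n] z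

noncomputable def cdig (z : ℝ) : ℕ → Bool := fun n => decide (¬ (citer z n ≤ 1/2))

lemma citer_succ (z : ℝ) (n : ℕ) : citer z (n+1) = cexp (citer z n) := by
  unfold citer
  rw [Function.iterate_succ_apply']

lemma citer_mem (z : ℝ) (hz : z ∈ cantorSet) (n : ℕ) : citer z n ∈ cantorSet := by
  induction n with
  | zero => exact hz
  | succ n ih =>
    rw [citer_succ]
    rcases cantorSet_self_similar ih with ⟨h1, h2⟩ | ⟨h1, h2⟩
    · rwa [cexp, if_pos h1]
    · rwa [cexp, if_neg (not_le.2 h1)]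

lemma citer_identity (z : ℝ) (n : ℕ) :
    z = (∑ k ∈ Finset.range n, if cdig z k then terW k else 0) + citer z n / 3^n := by
  induction n with
  | zero => simp [citer]
  | succ n ih =>
    have hp : (0:ℝ) < 3^n := by positivity
    have hp1 : (0:ℝ) < 3^(n+1) := by positivity
    rw [Finset.sum_range_succ, citer_succ]
    simp only [cexp]
    by_cases hc : citer z n ≤ 1/2
    · have hd : cdig z n = false := by unfold cdig; simp only [decide_eq_false_iff_not, not_not]; linarith
      rw [hd, if_pos hc]
      simp only [Bool.false_eq_true, if_false, add_zero]
      have e1 : 3 * citer z n / 3^(n+1) = citer z n / 3^n := by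
        rw [pow_succ]; field_simp
      rw [e1]
      exact ih
    · have hd : cdig z n = true := by unfold cdig; simp only [decide_eq_true_eq, not_le]; linarith
      rw [hd, if_neg hc]
      simp only [if_true]
      have e1 : (3 * citer z n - 2) / 3^(n+1) = citer z n / 3^n - 2/3^(n+1) := by
        rw [pow_succ]; field_simp
      have e2 : terW n = 2/3^(n+1) := rfl
      rw [e2, e1]
      linarith [ih]

lemma cantorSet_subset_achievementSet : cantorSet ⊆ achievementSet terW := by
  intro z hz
  rw [achievementSet_eq_range]
  refine ⟨cdig z, ?_⟩
  -- partial sums converge to z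
  have hpartial : Tendsto (fun n => ∑ k ∈ Finset.range n,
      (if cdig z k then terW k else 0)) atTop (𝓝 z) := by
    have hterm : Tendsto (fun n : ℕ => citer z n / 3^n) atTop (𝓝 0) := by
      apply squeeze_zero (fun n => ?_) (fun n => ?_)
          (tendsto_pow_atTop_nhds_zero_of_lt_one (by norm_num : (0:ℝ) ≤ 1/3)
            (by norm_num : (1/3:ℝ) < 1))
      · have := (cantorSet_subset_unitInterval (citer_mem z hz n)).1
        positivity
      · have h1 := (cantorSet_subset_unitInterval (citer_mem z hz n)).2
        rw [div_le_iff₀ (by positivity)]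
        rw [show (1/3:ℝ)^n * 3^n = 1 by rw [← mul_pow]; norm_num]
        exact h1
    have heq : ∀ n, (∑ k ∈ Finset.range n, if cdig z k then terW k else 0) =
        z - citer z n / 3^n := fun n => by
      have := citer_identity z n
      linarith
    rw [show (fun n => ∑ k ∈ Finset.range n, if cdig z k then terW k else 0) =
        (fun n => z - citer z n / 3^n) from funext heq]
    simpa using tendsto_const_nhds.sub hterm
  have hsum2 := (summable_ind _ summable_terW (cdig z)).hasSum.tendsto_sum_nat
  show subSum terW (cdig z) = z
  unfold subSum
  exact tendsto_nhds_unique hsum2 hpartial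

lemma cantorSet_eq_achievementSet : cantorSet = achievementSet terW :=
  le_antisymm cantorSet_subset_achievementSet achievementSet_terW_subset


lemma cantorish_achievementSet (x : ℕ → ℝ) (hpos : ∀ n, 0 < x n) (hsum : Summable x)
    (h : ∀ᶠ n in Filter.atTop, seqTail x n < x n) : Cantorish (achievementSet x) :=
  ⟨isCompact_achievementSet x hsum, ⟨0, zero_mem_achievementSet x⟩,
   fun _z hz δ hδ => perfect_achievementSet x hpos hsum hz hδ,
   fun _a _ _b _ hab => gap_achievementSet hpos hsum h hab⟩

end KakeyaAux

open KakeyaAux in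
/-- (Kakeya) If `x_n > R_n` for all sufficiently large `n`, then the achievement set is
homeomorphic to the Cantor ternary set. -/
theorem achievementSet_homeomorph_cantorSet_of_tail_lt (x : ℕ → ℝ) (hpos : ∀ n, 0 < x n)
    (hsum : Summable x) (h : ∀ᶠ n in Filter.atTop, seqTail x n < x n) :
    Nonempty (↥(achievementSet x) ≃ₜ ↥cantorSet) := by
  have hC1 : Cantorish (achievementSet x) := cantorish_achievementSet x hpos hsum h
  have hC2 : Cantorish cantorSet := by
    rw [cantorSet_eq_achievementSet]
    exact cantorish_achievementSet terW terW_pos summable_terW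
      (Filter.Eventually.of_forall seqTail_terW_lt)
  obtain ⟨e1⟩ := cantorish_homeo hC1
  obtain ⟨e2⟩ := cantorish_homeo hC2
  exact ⟨e1.symm.trans e2⟩
end

section
/- (Nymann–Saenz gap lemma) Let x : ℕ → ℝ be a sequence of positive terms with total sum s = Σ_{n≥1} x_n < ∞ and achievement set E = E(x). If the open interval (a,b) is a gap of E (a bounded connected component of ℝ \ E with a, b ∈ E), then there exist ε > 0 and ε' > 0 such that E ∩ [b, b+ε] = b + (E ∩ [0, ε]) and E ∩ [a−ε', a] = (a − s) + (E ∩ [s−ε', s]). -/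
namespace NymannSaenzAux

open Finset

variable {x : ℕ → ℝ}

lemma sel_nonneg (hpos : ∀ n, 0 < x n) {ε : ℕ → ℝ} (hε : ∀ n, ε n = 0 ∨ ε n = 1) (n : ℕ) :
    0 ≤ ε n * x n := by rcases hε n with h | h <;> simp [h, (hpos n).le]

lemma sel_le (hpos : ∀ n, 0 < x n) {ε : ℕ → ℝ} (hε : ∀ n, ε n = 0 ∨ ε n = 1) (n : ℕ) :
    ε n * x n ≤ x n := by rcases hε n with h | h <;> simp [h, (hpos n).le]

lemma sel_summable (hpos : ∀ n, 0 < x n) (hsum : Summable x)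
    {ε : ℕ → ℝ} (hε : ∀ n, ε n = 0 ∨ ε n = 1) : Summable fun n => ε n * x n :=
  Summable.of_nonneg_of_le (sel_nonneg hpos hε) (sel_le hpos hε) hsum

lemma symm_mem (hpos : ∀ n, 0 < x n) (hsum : Summable x) {t : ℝ}
    (ht : t ∈ achievementSet x) : (∑' n, x n) - t ∈ achievementSet x := by
  obtain ⟨ε, hε, rfl⟩ := ht
  refine ⟨fun n => 1 - ε n, fun n => ?_, ?_⟩
  · rcases hε n with h | h <;> simp [h]
  · rw [← Summable.tsum_sub hsum (sel_summable hpos hsum hε)]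
    exact tsum_congr fun n => by ring

/-- `e` is a subsum of the tail of `x` beyond `N`. -/
def TailMem (x : ℕ → ℝ) (N : ℕ) (e : ℝ) : Prop :=
  ∃ ε : ℕ → ℝ, (∀ n, ε n = 0 ∨ ε n = 1) ∧ (∀ n < N, ε n = 0) ∧ e = ∑' n, ε n * x n

lemma TailMem.mem {N : ℕ} {e : ℝ} (h : TailMem x N e) : e ∈ achievementSet x := by
  obtain ⟨ε, hε, _, he⟩ := h; exact ⟨ε, hε, he⟩

lemma TailMem.zero (N : ℕ) : TailMem x N 0 :=
  ⟨fun _ => 0, fun _ => Or.inl rfl, fun _ _ => rfl, by simp⟩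

lemma TailMem.nonneg (hpos : ∀ n, 0 < x n) {N : ℕ} {e : ℝ} (h : TailMem x N e) : 0 ≤ e := by
  obtain ⟨ε, hε, _, rfl⟩ := h
  exact tsum_nonneg (sel_nonneg hpos hε)

lemma TailMem.le (hpos : ∀ n, 0 < x n) (hsum : Summable x) {N : ℕ} {e : ℝ}
    (h : TailMem x N e) : e ≤ ∑' n, x (n + N) := by
  obtain ⟨ε, hε, h0, rfl⟩ := h
  have hs := sel_summable hpos hsum hε
  have hsplit := Summable.sum_add_tsum_nat_add (f := fun n => ε n * x n) N hs
  have hz : ∑ i ∈ range N, ε i * x i = 0 :=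
    Finset.sum_eq_zero fun i hi => by rw [h0 i (mem_range.mp hi), zero_mul]
  rw [← hsplit, hz, zero_add]
  exact Summable.tsum_le_tsum (fun n => sel_le hpos hε (n + N))
    ((summable_nat_add_iff N).mpr hs) ((summable_nat_add_iff N).mpr hsum)

lemma decompose (hpos : ∀ n, 0 < x n) (hsum : Summable x) {t : ℝ}
    (ht : t ∈ achievementSet x) (N : ℕ) :
    ∃ F : Finset ℕ, F ⊆ range N ∧ ∃ e, TailMem x N e ∧ t = (∑ n ∈ F, x n) + e := by
  obtain ⟨ε, hε, rfl⟩ := ht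
  set ε' : ℕ → ℝ := fun n => if n < N then 0 else ε n with hε'def
  have hε'01 : ∀ n, ε' n = 0 ∨ ε' n = 1 := fun n => by
    by_cases h : n < N
    · simp [ε', h]
    · simpa [ε', h] using hε n
  refine ⟨(range N).filter (fun n => ε n = 1), filter_subset _ _,
    ∑' n, ε' n * x n, ⟨ε', hε'01, fun n hn => by simp [ε', hn], rfl⟩, ?_⟩
  have hs := sel_summable hpos hsum hε
  have hs' := sel_summable hpos hsum hε'01
  have h1 : ∑ i ∈ range N, ε' i * x i = 0 :=
    Finset.sum_eq_zero fun i hi => by simp [ε', mem_range.mp hi]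
  have e1 : ∑' n, ε' n * x n = ∑' n : ℕ, ε (n + N) * x (n + N) := by
    rw [← Summable.sum_add_tsum_nat_add (f := fun n => ε' n * x n) N hs', h1, zero_add]
    exact tsum_congr fun n => by simp [ε', Nat.not_lt.mpr (Nat.le_add_left N n)]
  have h2 : ∑ i ∈ range N, ε i * x i = ∑ n ∈ (range N).filter (fun n => ε n = 1), x n := by
    rw [Finset.sum_filter]
    refine Finset.sum_congr rfl fun i _ => ?_
    rcases hε i with h | h <;> simp [h]
  rw [e1, ← Summable.sum_add_tsum_nat_add (f := fun n => ε n * x n) N hs, h2]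

lemma recompose (hpos : ∀ n, 0 < x n) (hsum : Summable x) {N : ℕ} {F : Finset ℕ}
    (hF : F ⊆ range N) {e : ℝ} (he : TailMem x N e) :
    (∑ n ∈ F, x n) + e ∈ achievementSet x := by
  obtain ⟨ε, hε, h0, rfl⟩ := he
  refine ⟨fun n => if n ∈ F then 1 else ε n, fun n => ?_, ?_⟩
  · by_cases h : n ∈ F
    · simp [h]
    · simpa [h] using hε n
  · have hind : Summable fun n => if n ∈ F then x n else 0 := by
      refine Summable.of_nonneg_of_le (fun n => ?_) (fun n => ?_) hsum
      · by_cases h : n ∈ F <;> simp [h, (hpos n).le]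
      · by_cases h : n ∈ F <;> simp [h, (hpos n).le]
    calc (∑ n ∈ F, x n) + ∑' n, ε n * x n
        = (∑' n, if n ∈ F then x n else 0) + ∑' n, ε n * x n := by
          rw [tsum_eq_sum (s := F) (f := fun n => if n ∈ F then x n else 0)
            (fun b hb => by simp [hb])]
          simp
      _ = ∑' n, ((if n ∈ F then x n else 0) + ε n * x n) :=
          (Summable.tsum_add hind (sel_summable hpos hsum hε)).symm
      _ = ∑' n, (if n ∈ F then (1:ℝ) else ε n) * x n := by
          refine tsum_congr fun n => ?_
          by_cases h : n ∈ F
          · have hz := h0 n (mem_range.mp (hF h))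
            simp [h, hz]
          · simp [h]

lemma tailMem_of_small (hpos : ∀ n, 0 < x n) (hsum : Summable x) {N : ℕ} {e : ℝ}
    (he : e ∈ achievementSet x) (hsmall : ∀ n < N, e < x n) : TailMem x N e := by
  obtain ⟨ε, hε, rfl⟩ := he
  refine ⟨ε, hε, fun n hn => ?_, rfl⟩
  rcases hε n with h | h
  · exact h
  · exfalso
    have hle : x n ≤ ∑' n, ε n * x n := by
      have := Summable.le_tsum (sel_summable hpos hsum hε) n (fun j _ => sel_nonneg hpos hε j)
      rwa [h, one_mul] at this
    exact (hsmall n hn).not_ge hle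

lemma part1 (x : ℕ → ℝ) (hpos : ∀ n, 0 < x n) (hsum : Summable x)
    (a b : ℝ) (ha : a ∈ achievementSet x) (hb : b ∈ achievementSet x) (hab : a < b)
    (hgap : Set.Ioo a b ∩ achievementSet x = ∅) :
    ∃ ε > (0:ℝ), achievementSet x ∩ Set.Icc b (b + ε) =
      (fun t => b + t) '' (achievementSet x ∩ Set.Icc 0 ε) := by
  have hgap' : ∀ t ∈ achievementSet x, t ∉ Set.Ioo a b := fun t ht hmem =>
    Set.eq_empty_iff_forall_notMem.mp hgap t ⟨hmem, ht⟩
  obtain ⟨N, hN⟩ : ∃ N, ∑' n, x (n + N) < b - a :=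
    ((tendsto_sum_nat_add x).eventually_lt_const (show (0:ℝ) < b - a by linarith)).exists
  set HS : Finset ℝ := ((range N).powerset).image (fun F => ∑ n ∈ F, x n) with hHSdef
  have hHSmem : ∀ σ ∈ HS, σ ∈ achievementSet x := by
    intro σ hσ
    obtain ⟨F, hF, rfl⟩ := mem_image.mp hσ
    have := recompose hpos hsum (mem_powerset.mp hF) (TailMem.zero (x := x) N)
    simpa using this
  set T : Finset ℝ :=
    insert (b - a) ((range N).image x ∪ (HS.filter (fun s => b < s)).image (fun s => s - b))
    with hTdef
  have hTpos : ∀ t ∈ T, 0 < t := by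
    intro t htT
    rcases mem_insert.mp htT with h | h
    · rw [h]; linarith
    rcases mem_union.mp h with h | h
    · obtain ⟨n, _, rfl⟩ := mem_image.mp h
      exact hpos n
    · obtain ⟨σ, hσ, rfl⟩ := mem_image.mp h
      have := (mem_filter.mp hσ).2
      linarith
  have hTne : T.Nonempty := ⟨b - a, mem_insert_self _ _⟩
  have hminpos : 0 < T.min' hTne := hTpos _ (T.min'_mem hTne)
  set ε : ℝ := T.min' hTne / 2 with hεdef
  have hεpos : 0 < ε := by positivity
  have hεlt : ∀ t ∈ T, ε < t := fun t htT =>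
    lt_of_lt_of_le (by rw [hεdef]; linarith) (T.min'_le t htT)
  have key : ∀ t ∈ achievementSet x, b ≤ t → t ≤ b + ε →
      ∃ F, F ⊆ range N ∧ (∑ n ∈ F, x n) = b ∧ TailMem x N (t - b) := by
    intro t htE hbt htb
    obtain ⟨F, hF, e, he, heq⟩ := decompose hpos hsum htE N
    have hσE : (∑ n ∈ F, x n) ∈ achievementSet x :=
      hHSmem _ (mem_image.mpr ⟨F, mem_powerset.mpr hF, rfl⟩)
    have henn : 0 ≤ e := he.nonneg hpos
    have herN : e ≤ ∑' n, x (n + N) := he.le hpos hsum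
    have hσa : a < ∑ n ∈ F, x n := by linarith
    have hσb : (∑ n ∈ F, x n) ≤ b := by
      by_contra h
      push_neg at h
      have hmem : (∑ n ∈ F, x n) - b ∈ T := by
        refine mem_insert.mpr (Or.inr (mem_union.mpr (Or.inr (mem_image.mpr ⟨_, ?_, rfl⟩))))
        exact mem_filter.mpr ⟨mem_image.mpr ⟨F, mem_powerset.mpr hF, rfl⟩, h⟩
      have := hεlt _ hmem
      linarith
    have hσeq : (∑ n ∈ F, x n) = b := by
      rcases eq_or_lt_of_le hσb with h | h
      · exact h
      · exact absurd ⟨hσa, h⟩ (hgap' _ hσE)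
    have het : e = t - b := by rw [hσeq] at heq; linarith
    exact ⟨F, hF, hσeq, het ▸ he⟩
  refine ⟨ε, hεpos, ?_⟩
  ext t
  constructor
  · rintro ⟨htE, hbt, htb⟩
    obtain ⟨F, hF, hFb, htail⟩ := key t htE hbt htb
    exact ⟨t - b, ⟨htail.mem, by constructor <;> linarith⟩, by ring⟩
  · rintro ⟨e, ⟨heE, he0, heε⟩, rfl⟩
    obtain ⟨G, hG, hGb, -⟩ := key b hb le_rfl (by linarith)
    have hetail : TailMem x N e := by
      refine tailMem_of_small hpos hsum heE fun n hn => lt_of_le_of_lt heε (hεlt (x n) ?_)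
      exact mem_insert.mpr (Or.inr (mem_union.mpr (Or.inl
        (mem_image.mpr ⟨n, mem_range.mpr hn, rfl⟩))))
    have hmem := recompose hpos hsum hG hetail
    rw [hGb] at hmem
    exact ⟨hmem, by show b ≤ b + e; linarith, by show b + e ≤ b + ε; linarith⟩

end NymannSaenzAux

open NymannSaenzAux in
/-- (Nymann–Saenz gap lemma) If `(a,b)` is a gap of `E = E(x)` (a bounded connected component
of `ℝ \ E`, i.e. `a, b ∈ E`, `a < b` and `(a,b) ∩ E = ∅`), then there are `ε, ε' > 0` with
`E ∩ [b, b+ε] = b + (E ∩ [0, ε])` and `E ∩ [a-ε', a] = (a - s) + (E ∩ [s-ε', s])`,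
where `s` is the total sum of the series. -/
theorem achievementSet_gap_lemma (x : ℕ → ℝ) (hpos : ∀ n, 0 < x n) (hsum : Summable x)
    (a b : ℝ) (ha : a ∈ achievementSet x) (hb : b ∈ achievementSet x) (hab : a < b)
    (hgap : Set.Ioo a b ∩ achievementSet x = ∅) :
    ∃ ε > (0 : ℝ), ∃ ε' > (0 : ℝ),
      achievementSet x ∩ Set.Icc b (b + ε) =
        (fun t => b + t) '' (achievementSet x ∩ Set.Icc 0 ε) ∧
      achievementSet x ∩ Set.Icc (a - ε') a =
        (fun t => (a - ∑' n, x n) + t) ''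
          (achievementSet x ∩ Set.Icc ((∑' n, x n) - ε') (∑' n, x n)) := by
  obtain ⟨ε, hε, hpart1⟩ := part1 x hpos hsum a b ha hb hab hgap
  set s : ℝ := ∑' n, x n with hsdef
  have ha' : s - b ∈ achievementSet x := symm_mem hpos hsum hb
  have hb' : s - a ∈ achievementSet x := symm_mem hpos hsum ha
  have hab' : s - b < s - a := by linarith
  have hgap2 : Set.Ioo (s - b) (s - a) ∩ achievementSet x = ∅ := by
    ext y
    simp only [Set.mem_inter_iff, Set.mem_Ioo, Set.mem_empty_iff_false, iff_false, not_and]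
    rintro ⟨h1, h2⟩ hyE
    have hy : s - y ∈ Set.Ioo a b ∩ achievementSet x :=
      ⟨⟨by linarith, by linarith⟩, symm_mem hpos hsum hyE⟩
    rw [hgap] at hy
    exact hy
  obtain ⟨ε', hε', hpart2⟩ := part1 x hpos hsum (s - b) (s - a) ha' hb' hab' hgap2
  refine ⟨ε, hε, ε', hε', hpart1, ?_⟩
  ext t
  constructor
  · rintro ⟨htE, ht1, ht2⟩
    have hst : s - t ∈ achievementSet x ∩ Set.Icc (s - a) ((s - a) + ε') :=
      ⟨symm_mem hpos hsum htE, by constructor <;> linarith⟩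
    rw [hpart2] at hst
    obtain ⟨e, ⟨heE, he0, heε⟩, heq⟩ := hst
    have heq' : (s - a) + e = s - t := heq
    refine ⟨s - e, ⟨symm_mem hpos hsum heE, by constructor <;> linarith⟩, ?_⟩
    show (a - s) + (s - e) = t
    linarith
  · rintro ⟨u, ⟨huE, hu1, hu2⟩, heq⟩
    have heq' : (a - s) + u = t := heq
    have h1 : s - u ∈ achievementSet x ∩ Set.Icc 0 ε' :=
      ⟨symm_mem hpos hsum huE, by constructor <;> linarith⟩
    have h2 : (s - a) + (s - u) ∈ achievementSet x ∩ Set.Icc (s - a) ((s - a) + ε') := by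
      rw [hpart2]
      exact ⟨s - u, h1, rfl⟩
    obtain ⟨hE2, hc1, hc2⟩ := h2
    have htE : t ∈ achievementSet x := by
      have hsym := symm_mem hpos hsum hE2
      have he : s - ((s - a) + (s - u)) = t := by linarith
      rwa [he] at hsym
    exact ⟨htE, by constructor <;> linarith⟩
end

section
/- (Kenyon–Nitecki) Let n ≥ 2 be an integer and let d_0, d_1, …, d_{n−1} be integers with d_i ≡ i (mod n) for each i. Then the set S = { Σ_{i≥1} a_i / n^i : a_i ∈ {d_0, d_1, …, d_{n−1}} for all i } of generalized base-n expansions using these digits has nonempty interior in ℝ. -/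
open Finset Set

namespace KN

/-- The value of a digit sequence. -/
noncomputable def val (n : ℕ) (d : Fin n → ℤ) (a : ℕ → Fin n) : ℝ :=
  ∑' i : ℕ, (d (a i) : ℝ) / (n : ℝ) ^ (i + 1)

/-- A bound on the digits. -/
noncomputable def Mb (n : ℕ) (d : Fin n → ℤ) : ℝ := ∑ j : Fin n, |(d j : ℝ)|

lemma Mb_nonneg (n : ℕ) (d : Fin n → ℤ) : 0 ≤ Mb n d :=
  Finset.sum_nonneg fun j _ => abs_nonneg _

lemma abs_d_le (n : ℕ) (d : Fin n → ℤ) (j : Fin n) : |(d j : ℝ)| ≤ Mb n d :=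
  Finset.single_le_sum (fun i _ => abs_nonneg ((d i : ℝ))) (Finset.mem_univ j)

/-- Key arithmetic lemma: the integers `∑_{i<m} d(a i) n^(m-1-i)` cover all residues
mod `n^m`. -/
lemma exists_prefix (n : ℕ) (d : Fin n → ℤ) (hn : 2 ≤ n)
    (hd : ∀ i : Fin n, d i ≡ (i : ℤ) [ZMOD (n : ℤ)]) (m : ℕ) (t : ℤ) :
    ∃ (a : ℕ → Fin n) (k : ℤ),
      ∑ i ∈ Finset.range m, d (a i) * (n : ℤ) ^ (m - 1 - i) = t + k * (n : ℤ) ^ m := by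
  have hnpos : (0 : ℤ) < (n : ℤ) := by exact_mod_cast Nat.lt_of_lt_of_le two_pos hn
  induction m generalizing t with
  | zero => exact ⟨fun _ => ⟨0, by omega⟩, -t, by simp⟩
  | succ m ih =>
    have h1 : 0 ≤ t % (n : ℤ) := Int.emod_nonneg t (by omega)
    have h2 : t % (n : ℤ) < (n : ℤ) := Int.emod_lt_of_pos t hnpos
    have hjlt : (t % (n : ℤ)).toNat < n := by omega
    set j : Fin n := ⟨(t % (n : ℤ)).toNat, hjlt⟩ with hjdef
    have hjval : ((j : ℕ) : ℤ) = t % (n : ℤ) := by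
      simp [hjdef, Int.toNat_of_nonneg h1]
    have hmod : d j ≡ t [ZMOD (n : ℤ)] := by
      have h3 : d j % (n : ℤ) = ((j : ℕ) : ℤ) % (n : ℤ) := hd j
      show d j % (n : ℤ) = t % (n : ℤ)
      rw [h3, hjval, Int.emod_emod_of_dvd t dvd_rfl]
    obtain ⟨t', ht'⟩ : (n : ℤ) ∣ t - d j := Int.ModEq.dvd hmod
    obtain ⟨a', k, hk⟩ := ih t'
    refine ⟨fun i => if i < m then a' i else j, k, ?_⟩
    have hsum : ∑ i ∈ Finset.range (m + 1),
        d (if i < m then a' i else j) * (n : ℤ) ^ (m + 1 - 1 - i)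
        = (∑ i ∈ Finset.range m, d (a' i) * (n : ℤ) ^ (m - 1 - i)) * n + d j := by
      rw [Finset.sum_range_succ]
      congr 1
      · rw [Finset.sum_mul]
        refine Finset.sum_congr rfl fun i hi => ?_
        have him : i < m := Finset.mem_range.mp hi
        have hexp : m + 1 - 1 - i = (m - 1 - i) + 1 := by omega
        rw [if_pos him, hexp, pow_succ]
        ring
      · rw [if_neg (lt_irrefl m)]
        norm_num
    rw [hsum, hk]
    linear_combination -ht'

lemma norm_term_le (n : ℕ) (d : Fin n → ℤ) (hn : 2 ≤ n) (a : ℕ → Fin n) (i : ℕ) :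
    ‖(d (a i) : ℝ) / (n : ℝ) ^ (i + 1)‖ ≤ Mb n d * ((n : ℝ)⁻¹) ^ i := by
  have hn0 : (0 : ℝ) < (n : ℝ) := by positivity
  have hn1 : (1 : ℝ) ≤ (n : ℝ) := by exact_mod_cast Nat.one_le_of_lt hn
  rw [norm_div, Real.norm_eq_abs, Real.norm_eq_abs,
    abs_of_pos (by positivity : (0:ℝ) < (n:ℝ) ^ (i+1))]
  have hle : (n : ℝ) ^ i ≤ (n : ℝ) ^ (i + 1) := pow_le_pow_right₀ hn1 (Nat.le_succ i)
  calc |(d (a i) : ℝ)| / (n : ℝ) ^ (i + 1)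
      ≤ Mb n d / (n : ℝ) ^ i :=
        div_le_div₀ (Mb_nonneg n d) (abs_d_le n d (a i)) (by positivity) hle
    _ = Mb n d * ((n : ℝ)⁻¹) ^ i := by rw [inv_pow, div_eq_mul_inv]

lemma summable_bound (n : ℕ) (d : Fin n → ℤ) (hn : 2 ≤ n) :
    Summable (fun i : ℕ => Mb n d * ((n : ℝ)⁻¹) ^ i) := by
  have hn1 : (1 : ℝ) < (n : ℝ) := by exact_mod_cast hn.trans_lt' one_lt_two
  exact (summable_geometric_of_lt_one (by positivity) (inv_lt_one_of_one_lt₀ hn1)).mul_left _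

lemma summable_val (n : ℕ) (d : Fin n → ℤ) (hn : 2 ≤ n) (a : ℕ → Fin n) :
    Summable (fun i : ℕ => (d (a i) : ℝ) / (n : ℝ) ^ (i + 1)) :=
  Summable.of_norm_bounded (summable_bound n d hn) (norm_term_le n d hn a)

lemma abs_val_le (n : ℕ) (d : Fin n → ℤ) (hn : 2 ≤ n) (a : ℕ → Fin n) :
    |val n d a| ≤ 2 * Mb n d := by
  have hn1 : (1 : ℝ) < (n : ℝ) := by exact_mod_cast hn.trans_lt' one_lt_two
  have hn0 : (0 : ℝ) < (n : ℝ) := by positivity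
  have h1 : |val n d a| ≤ ∑' i : ℕ, Mb n d * ((n : ℝ)⁻¹) ^ i := by
    rw [← Real.norm_eq_abs]
    refine (norm_tsum_le_tsum_norm ?_).trans
      (Summable.tsum_le_tsum (norm_term_le n d hn a) ?_ (summable_bound n d hn))
    · exact (summable_val n d hn a).abs
    · exact (summable_val n d hn a).abs
  have h2 : ∑' i : ℕ, Mb n d * ((n : ℝ)⁻¹) ^ i = Mb n d * (1 - (n : ℝ)⁻¹)⁻¹ := by
    rw [tsum_mul_left, tsum_geometric_of_lt_one (by positivity) (inv_lt_one_of_one_lt₀ hn1)]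
  have hhalf : (n : ℝ)⁻¹ ≤ 1 / 2 := by
    rw [inv_le_comm₀ hn0 (by norm_num)]
    norm_num
    exact_mod_cast hn
  have h3 : (1 - (n : ℝ)⁻¹)⁻¹ ≤ 2 := by
    rw [inv_le_comm₀ (by linarith) (by norm_num)]
    linarith
  calc |val n d a| ≤ Mb n d * (1 - (n : ℝ)⁻¹)⁻¹ := h2 ▸ h1
    _ ≤ Mb n d * 2 := mul_le_mul_of_nonneg_left h3 (Mb_nonneg n d)
    _ = 2 * Mb n d := mul_comm _ _

lemma continuous_val (n : ℕ) (d : Fin n → ℤ) (hn : 2 ≤ n) : Continuous (val n d) := by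
  refine continuous_tsum (f := fun i (a : ℕ → Fin n) => (d (a i) : ℝ) / (n : ℝ) ^ (i + 1))
    (fun i => ?_) (summable_bound n d hn) (fun i a => norm_term_le n d hn a i)
  exact Continuous.div_const
    ((continuous_of_discreteTopology (α := Fin n) (f := fun j => (d j : ℝ))).comp
      (continuous_apply i)) _

lemma isClosed_range_val (n : ℕ) (d : Fin n → ℤ) (hn : 2 ≤ n) :
    IsClosed (Set.range (val n d)) :=
  (isCompact_range (continuous_val n d hn)).isClosed

lemma val_split (n : ℕ) (d : Fin n → ℤ) (hn : 2 ≤ n) (a : ℕ → Fin n) (m : ℕ) :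
    val n d a = (∑ i ∈ Finset.range m, (d (a i) : ℝ) / (n : ℝ) ^ (i + 1))
      + ((n : ℝ) ^ m)⁻¹ * val n d (fun i => a (i + m)) := by
  have hn0 : (0 : ℝ) < (n : ℝ) := by positivity
  have h := (Summable.sum_add_tsum_nat_add (f := fun i : ℕ => (d (a i) : ℝ) / (n : ℝ) ^ (i + 1)) m
    (summable_val n d hn a)).symm
  rw [val, h]
  congr 1
  rw [val, ← tsum_mul_left]
  refine tsum_congr fun i => ?_
  have hpow : (n : ℝ) ^ (i + m + 1) = (n : ℝ) ^ m * (n : ℝ) ^ (i + 1) := by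
    rw [← pow_add]; ring_nf
  rw [hpow]
  field_simp

lemma prefix_cast (n : ℕ) (d : Fin n → ℤ) (hn : 2 ≤ n) (a : ℕ → Fin n) (m : ℕ) :
    ∑ i ∈ Finset.range m, (d (a i) : ℝ) / (n : ℝ) ^ (i + 1)
      = ((∑ i ∈ Finset.range m, d (a i) * (n : ℤ) ^ (m - 1 - i) : ℤ) : ℝ) / (n : ℝ) ^ m := by
  have hn0 : (0 : ℝ) < (n : ℝ) := by positivity
  push_cast
  rw [Finset.sum_div]
  refine Finset.sum_congr rfl fun i hi => ?_
  have him : i < m := Finset.mem_range.mp hi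
  have hexp : (m - 1 - i) + (i + 1) = m := by omega
  have hpow : (n : ℝ) ^ m = (n : ℝ) ^ (m - 1 - i) * (n : ℝ) ^ (i + 1) := by
    rw [← pow_add, hexp]
  rw [div_eq_div_iff (by positivity) (by positivity), hpow]
  ring

/-- Approximation: every real is close to an integer translate of an element of the set. -/
lemma approx (n : ℕ) (d : Fin n → ℤ) (hn : 2 ≤ n)
    (hd : ∀ i : Fin n, d i ≡ (i : ℤ) [ZMOD (n : ℤ)]) (x : ℝ) (m : ℕ) :
    ∃ (a : ℕ → Fin n) (k : ℤ),
      |x + k - val n d a| ≤ (1 + 2 * Mb n d) * ((n : ℝ)⁻¹) ^ m := by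
  have hn0 : (0 : ℝ) < (n : ℝ) := by positivity
  have hpowpos : (0 : ℝ) < (n : ℝ) ^ m := by positivity
  set t : ℤ := ⌊(n : ℝ) ^ m * x⌋ with htdef
  obtain ⟨a, k₀, hk₀⟩ := exists_prefix n d hn hd m t
  refine ⟨a, k₀, ?_⟩
  have hsplit := val_split n d hn a m
  rw [prefix_cast n d hn a m, hk₀] at hsplit
  set τ := val n d (fun i => a (i + m)) with hτ
  have hτle : |τ| ≤ 2 * Mb n d := abs_val_le n d hn _
  have hval : val n d a = (t : ℝ) / (n : ℝ) ^ m + (k₀ : ℝ) + τ / (n : ℝ) ^ m := by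
    rw [hsplit]
    push_cast
    field_simp
  have hfloor1 : (t : ℝ) ≤ (n : ℝ) ^ m * x := Int.floor_le _
  have hfloor2 : (n : ℝ) ^ m * x < t + 1 := Int.lt_floor_add_one _
  have hcancel : ((n : ℝ) ^ m)⁻¹ * (n : ℝ) ^ m = 1 := inv_mul_cancel₀ hpowpos.ne'
  have hxt : |x - (t : ℝ) / (n : ℝ) ^ m| ≤ ((n : ℝ)⁻¹) ^ m := by
    have key : x - (t : ℝ) / (n : ℝ) ^ m = ((n : ℝ) ^ m * x - t) / (n : ℝ) ^ m := by
      field_simp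
    rw [key, abs_div, abs_of_pos hpowpos, abs_of_nonneg (by linarith), inv_pow,
      div_le_iff₀ hpowpos, hcancel]
    linarith
  have heq : x + ((k₀ : ℤ) : ℝ) - val n d a
      = (x - (t : ℝ) / (n : ℝ) ^ m) - τ / (n : ℝ) ^ m := by
    rw [hval]; push_cast; ring
  have htau : |τ / (n : ℝ) ^ m| ≤ 2 * Mb n d * ((n : ℝ)⁻¹) ^ m := by
    rw [abs_div, abs_of_pos hpowpos, inv_pow, div_le_iff₀ hpowpos, mul_assoc, hcancel, mul_one]
    exact hτle
  calc |x + ((k₀ : ℤ) : ℝ) - val n d a|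
      = |(x - (t : ℝ) / (n : ℝ) ^ m) - τ / (n : ℝ) ^ m| := by rw [heq]
    _ ≤ |x - (t : ℝ) / (n : ℝ) ^ m| + |τ / (n : ℝ) ^ m| := abs_sub _ _
    _ ≤ ((n : ℝ)⁻¹) ^ m + 2 * Mb n d * ((n : ℝ)⁻¹) ^ m := add_le_add hxt htau
    _ = (1 + 2 * Mb n d) * ((n : ℝ)⁻¹) ^ m := by ring

/-- Covering: every real number has an integer translate in the set. -/
lemma cover (n : ℕ) (d : Fin n → ℤ) (hn : 2 ≤ n)
    (hd : ∀ i : Fin n, d i ≡ (i : ℤ) [ZMOD (n : ℤ)]) (x : ℝ) :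
    ∃ k : ℤ, x + (k : ℝ) ∈ Set.range (val n d) := by
  classical
  have hn1 : (1 : ℝ) < (n : ℝ) := by exact_mod_cast hn.trans_lt' one_lt_two
  have hr0 : (0 : ℝ) ≤ (n : ℝ)⁻¹ := by positivity
  have hr1 : (n : ℝ)⁻¹ < 1 := inv_lt_one_of_one_lt₀ hn1
  set C : ℝ := 1 + 2 * Mb n d with hC
  have hC0 : 0 < C := by have := Mb_nonneg n d; rw [hC]; linarith
  have H : ∀ m : ℕ, ∃ (a : ℕ → Fin n) (k : ℤ),
      |x + k - val n d a| ≤ C * ((n : ℝ)⁻¹) ^ m := fun m => approx n d hn hd x m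
  choose a k hk using H
  have hrm1 : ∀ m : ℕ, ((n : ℝ)⁻¹) ^ m ≤ 1 := fun m => pow_le_one₀ hr0 hr1.le
  have hkbound : ∀ m : ℕ, |(k m : ℝ)| ≤ |x| + 2 * Mb n d + C := by
    intro m
    have h1 := hk m
    have h2 := abs_val_le n d hn (a m)
    have h3 : ((n : ℝ)⁻¹) ^ m ≤ 1 := hrm1 m
    have h4 : |x + k m - val n d (a m)| ≤ C := by
      calc |x + k m - val n d (a m)| ≤ C * ((n : ℝ)⁻¹) ^ m := h1
        _ ≤ C * 1 := mul_le_mul_of_nonneg_left h3 hC0.le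
        _ = C := mul_one _
    have h5 : (k m : ℝ) = (x + k m - val n d (a m)) - x + val n d (a m) := by ring
    calc |(k m : ℝ)| = |(x + k m - val n d (a m)) - x + val n d (a m)| := by rw [← h5]
      _ ≤ |(x + k m - val n d (a m)) - x| + |val n d (a m)| := abs_add_le _ _
      _ ≤ (|x + k m - val n d (a m)| + |x|) + |val n d (a m)| :=
          add_le_add_left (abs_sub _ _) _
      _ ≤ (C + |x|) + 2 * Mb n d := add_le_add (add_le_add h4 le_rfl) h2
      _ = |x| + 2 * Mb n d + C := by ring
  set B : ℤ := ⌈|x| + 2 * Mb n d + C⌉ with hB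
  have hkB : ∀ m : ℕ, k m ∈ Set.Icc (-B) B := by
    intro m
    have h1 : |(k m : ℝ)| ≤ (B : ℝ) := (hkbound m).trans (Int.le_ceil _)
    rw [← Int.cast_abs, Int.cast_le] at h1
    exact Set.mem_Icc.mpr (abs_le.mp h1)
  have : Finite ↥(Set.Icc (-B) B) := (Set.finite_Icc (-B) B).to_subtype
  obtain ⟨y, hy⟩ := Finite.exists_infinite_fiber (fun m : ℕ => (⟨k m, hkB m⟩ : ↥(Set.Icc (-B) B)))
  have hyS : {m : ℕ | k m = (y : ℤ)}.Infinite := by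
    have h1 : ((fun m : ℕ => (⟨k m, hkB m⟩ : ↥(Set.Icc (-B) B))) ⁻¹' {y}).Infinite :=
      Set.infinite_coe_iff.mp hy
    refine h1.mono fun m hm => ?_
    have : (⟨k m, hkB m⟩ : ↥(Set.Icc (-B) B)) = y := hm
    exact congrArg Subtype.val this
  refine ⟨(y : ℤ), ?_⟩
  have hclosed := isClosed_range_val n d hn
  have hmem : x + ((y : ℤ) : ℝ) ∈ closure (Set.range (val n d)) := by
    rw [Metric.mem_closure_iff]
    intro ε hε
    obtain ⟨N, hN⟩ := exists_pow_lt_of_lt_one (show (0:ℝ) < ε / C by positivity) hr1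
    obtain ⟨m, hm, hNm⟩ := hyS.exists_gt N
    refine ⟨val n d (a m), Set.mem_range_self _, ?_⟩
    have hkm : k m = (y : ℤ) := hm
    have hpow : ((n : ℝ)⁻¹) ^ m ≤ ((n : ℝ)⁻¹) ^ N :=
      pow_le_pow_of_le_one hr0 hr1.le hNm.le
    calc dist (x + ((y : ℤ) : ℝ)) (val n d (a m))
        = |x + (k m : ℝ) - val n d (a m)| := by rw [Real.dist_eq, hkm]
      _ ≤ C * ((n : ℝ)⁻¹) ^ m := hk m
      _ ≤ C * ((n : ℝ)⁻¹) ^ N := mul_le_mul_of_nonneg_left hpow hC0.le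
      _ < C * (ε / C) := by
          exact mul_lt_mul_of_pos_left hN hC0
      _ = ε := by field_simp
  rwa [hclosed.closure_eq] at hmem

end KN

/-- (Kenyon–Nitecki) If `n ≥ 2` and `d_0, …, d_{n-1}` are integers with `d_i ≡ i (mod n)`,
then the set of generalized base-`n` expansions using these digits has nonempty interior. -/
theorem kenyon_nitecki (n : ℕ) (hn : 2 ≤ n) (d : Fin n → ℤ)
    (hd : ∀ i : Fin n, d i ≡ (i : ℤ) [ZMOD (n : ℤ)]) :
    (interior {x : ℝ | ∃ a : ℕ → Fin n,
      x = ∑' i : ℕ, (d (a i) : ℝ) / (n : ℝ) ^ (i + 1)}).Nonempty := by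
  have hset : {x : ℝ | ∃ a : ℕ → Fin n,
      x = ∑' i : ℕ, (d (a i) : ℝ) / (n : ℝ) ^ (i + 1)} = Set.range (KN.val n d) := by
    ext x
    exact ⟨fun ⟨a, h⟩ => ⟨a, h.symm⟩, fun ⟨a, h⟩ => ⟨a, h.symm⟩⟩
  rw [hset]
  have hclosed : ∀ kk : ℤ, IsClosed ((fun x : ℝ => x + (kk : ℝ)) ⁻¹' Set.range (KN.val n d)) :=
    fun kk => (KN.isClosed_range_val n d hn).preimage (continuous_id.add continuous_const)
  have hcover : (⋃ kk : ℤ, (fun x : ℝ => x + (kk : ℝ)) ⁻¹' Set.range (KN.val n d)) = Set.univ := by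
    rw [Set.eq_univ_iff_forall]
    intro x
    obtain ⟨kk, hkk⟩ := KN.cover n d hn hd x
    exact Set.mem_iUnion.mpr ⟨kk, hkk⟩
  obtain ⟨kk, hkk⟩ := nonempty_interior_of_iUnion_of_closed hclosed hcover
  obtain ⟨z, hz⟩ := hkk
  have h2 : (fun x : ℝ => x + (kk : ℝ)) ⁻¹' Set.range (KN.val n d)
      = (Homeomorph.addRight ((kk : ℝ))) ⁻¹' Set.range (KN.val n d) := rfl
  rw [h2, ← Homeomorph.preimage_interior] at hz
  exact ⟨_, hz⟩
end

section
/- Let (K_i)_{i≥1} be a sequence of compact subsets of [0,∞) with 0 ∈ K_i and diam(K_i) > 0 for every i, such that diam(K_i) → 0 as i → ∞ and Σ_{i≥1} sup(K_i) < ∞ (so that all the series below converge). Then the set S = { Σ_{i≥1} x_i : x_i ∈ K_i for all i } is a perfect set: it is compact and has no isolated points. -/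
/-- The generalized achievement set of a sequence of compact sets `K i`: all sums
`∑_{i} x_i` with `x_i ∈ K_i`. -/
def generalizedAchievementSet (K : ℕ → Set ℝ) : Set ℝ :=
  {s : ℝ | ∃ f : ℕ → ℝ, (∀ i, f i ∈ K i) ∧ s = ∑' i, f i}

/-- Let `(K_i)` be compact subsets of `[0,∞)` containing `0`, with positive diameters tending
to `0` and `∑ sup(K_i) < ∞`. Then `S = { ∑ x_i : x_i ∈ K_i }` is a perfect set: compact with
no isolated points. -/
theorem generalizedAchievementSet_perfect (K : ℕ → Set ℝ)
    (hcompact : ∀ i, IsCompact (K i)) (hnonneg : ∀ i, K i ⊆ Set.Ici 0)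
    (hzero : ∀ i, (0 : ℝ) ∈ K i) (hdiam : ∀ i, 0 < Metric.diam (K i))
    (hdiam0 : Filter.Tendsto (fun i => Metric.diam (K i)) Filter.atTop (nhds 0))
    (hsum : Summable (fun i => sSup (K i))) :
    IsCompact (generalizedAchievementSet K) ∧ Perfect (generalizedAchievementSet K) := by
  classical
  have hbdd : ∀ i, BddAbove (K i) := fun i => (hcompact i).bddAbove
  have hsummable : ∀ f : ℕ → ℝ, (∀ i, f i ∈ K i) → Summable f := fun f hf =>
    Summable.of_nonneg_of_le (fun i => hnonneg i (hf i))
      (fun i => le_csSup (hbdd i) (hf i)) hsum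
  have hCS : ∀ i, CompactSpace (K i) := fun i => isCompact_iff_compactSpace.mp (hcompact i)
  set g : (∀ i, K i) → ℝ := fun x => ∑' i, (x i : ℝ) with hg
  have hcont : Continuous g := by
    refine (tendstoUniformly_tsum hsum ?_).continuous (Filter.Eventually.of_forall ?_).frequently
    · intro n x
      rw [Real.norm_of_nonneg (hnonneg n (x n).2)]
      exact le_csSup (hbdd n) (x n).2
    · intro t
      exact continuous_finset_sum _ fun i _ => (continuous_apply i).subtype_val
  have hrange : Set.range g = generalizedAchievementSet K := by
    ext s
    constructor
    · rintro ⟨x, rfl⟩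
      exact ⟨fun i => (x i : ℝ), fun i => (x i).2, rfl⟩
    · rintro ⟨f, hf, rfl⟩
      exact ⟨fun i => ⟨f i, hf i⟩, rfl⟩
  have hcomp : IsCompact (generalizedAchievementSet K) := hrange ▸ isCompact_range hcont
  refine ⟨hcomp, hcomp.isClosed, ?_⟩
  intro s hs
  rw [accPt_iff_nhds]
  intro U hU
  obtain ⟨f, hf, rfl⟩ := hs
  obtain ⟨ε, hε, hball⟩ := Metric.mem_nhds_iff.mp hU
  obtain ⟨i, hi⟩ := (hdiam0.eventually (gt_mem_nhds hε)).exists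
  have hnt : (K i).Nontrivial := by
    rw [← Set.not_subsingleton_iff]
    intro h
    exact (hdiam i).ne' (Metric.diam_subsingleton h)
  obtain ⟨a, ha, b, hb, hab⟩ := hnt
  obtain ⟨y, hy, hyne⟩ : ∃ y ∈ K i, y ≠ f i := by
    rcases eq_or_ne (f i) a with h | h
    · exact ⟨b, hb, by rw [h]; exact hab.symm⟩
    · exact ⟨a, ha, h.symm⟩
  set f' : ℕ → ℝ := Function.update f i y with hf'def
  have hf' : ∀ j, f' j ∈ K j := by
    intro j
    rcases eq_or_ne j i with rfl | h
    · simpa [hf'def] using hy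
    · simpa [hf'def, Function.update_of_ne h] using hf j
  have key : (∑' j, f' j) - (∑' j, f j) = y - f i := by
    have h1 := Summable.tsum_eq_add_tsum_ite (hsummable f hf) i
    have h2 := Summable.tsum_eq_add_tsum_ite (hsummable f' hf') i
    have h3 : (∑' n, ite (n = i) (0 : ℝ) (f' n)) = ∑' n, ite (n = i) (0 : ℝ) (f n) := by
      apply tsum_congr
      intro n
      rcases eq_or_ne n i with rfl | h
      · simp
      · simp [hf'def, Function.update_of_ne h, h]
    rw [h1, h2, h3, hf'def, Function.update_self]
    ring
  refine ⟨∑' j, f' j, ⟨hball ?_, ⟨f', hf', rfl⟩⟩, ?_⟩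
  · rw [Metric.mem_ball, Real.dist_eq, key]
    calc |y - f i| = dist y (f i) := (Real.dist_eq _ _).symm
      _ ≤ Metric.diam (K i) := Metric.dist_le_diam_of_mem (hcompact i).isBounded hy (hf i)
      _ < ε := hi
  · intro h
    apply hyne
    have := key
    rw [h, sub_self] at this
    exact (sub_eq_zero.mp this.symm)
end
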